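/- arXiv:2005.08666 — 5 statements merged into one kernel-verified Lean document; each statement's English description precedes it below -/
import Mathlib

section
/- For every s > s₀: s² − 2Ω(p) > 0 for all p ∈ [0,1]; the function p ↦ H(p;s) is a strictly increasing C¹ bijection from [0,1] onto [0, d(s)]; and its inverse U = U(·;s) : [0, d(s)] → [0,1] is twice continuously differentiable and satisfies U''(y) + ω(U(y)) = 0 on [0, d(s)], U(0) = 0, U(d(s)) = 1, U'(0) = s, and U'(y) > 0 for all y ∈ [0, d(s)]. -/
open MeasureTheory Set Filter

noncomputable section

/-- `Omeg ω p = ∫₀^p ω(t) dt`, the primitive of the vorticity function. -/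
def Omeg (ω : ℝ → ℝ) (p : ℝ) : ℝ := ∫ t in (0:ℝ)..p, ω t

/-- `s0 ω = sqrt (max_{p ∈ [0,1]} 2 Ω(p))`. -/
def s0 (ω : ℝ → ℝ) : ℝ := Real.sqrt (sSup ((fun p => 2 * Omeg ω p) '' Icc (0:ℝ) 1))

/-- `Hp ω p s = (s² − 2Ω(p))^{-1/2}`. -/
def Hp (ω : ℝ → ℝ) (p s : ℝ) : ℝ := (Real.sqrt (s ^ 2 - 2 * Omeg ω p))⁻¹

/-- `Hfun ω p s = H(p; s) = ∫₀^p (s² − 2Ω(τ))^{-1/2} dτ`. -/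
def Hfun (ω : ℝ → ℝ) (p s : ℝ) : ℝ := ∫ τ in (0:ℝ)..p, Hp ω τ s

/-- `dd ω s = d(s) = H(1; s)`. -/
def dd (ω : ℝ → ℝ) (s : ℝ) : ℝ := Hfun ω 1 s

/-- `RR ω s = R(s) = s²/2 − Ω(1) + d(s)`, the Bernoulli constant of the stream solution. -/
def RR (ω : ℝ → ℝ) (s : ℝ) : ℝ := s ^ 2 / 2 - Omeg ω 1 + dd ω s

/-- `sigmaFun ω s r = σ(s; r)`. -/
def sigmaFun (ω : ℝ → ℝ) (s r : ℝ) : ℝ :=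
  ∫ p in (0:ℝ)..1,
    (1 / (2 * (Hp ω p s) ^ 2) - Hfun ω p s - Omeg ω p + Omeg ω 1 + r) * Hp ω p s

/-- Partial derivative in the first (horizontal) variable `q`. -/
def dq (f : ℝ → ℝ → ℝ) (q p : ℝ) : ℝ := deriv (fun x => f x p) q

/-- Partial derivative in the second (vertical) variable `p`. -/
def dp (f : ℝ → ℝ → ℝ) (q p : ℝ) : ℝ := deriv (fun y => f q y) p

/-- The height system with Bernoulli constant `r` on the strip `S = ℝ × [0,1]`. -/
structure HeightSol (ω : ℝ → ℝ) (r : ℝ) (h : ℝ → ℝ → ℝ) : Prop where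
  smooth : ContDiff ℝ 2 (Function.uncurry h)
  hp_pos : ∀ q : ℝ, ∀ p ∈ Icc (0:ℝ) 1, 0 < dp h q p
  pde : ∀ q : ℝ, ∀ p ∈ Icc (0:ℝ) 1,
    (1 + (dq h q p) ^ 2) / (dp h q p) ^ 2 * dp (dp h) q p
      - 2 * (dq h q p) / (dp h q p) * dp (dq h) q p
      + dq (dq h) q p - ω p * dp h q p = 0
  top : ∀ q : ℝ, (1 + (dq h q 1) ^ 2) / (2 * (dp h q 1) ^ 2) + h q 1 = r
  bot : ∀ q : ℝ, h q 0 = 0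

/-- The flow force of a height function `h`, computed on the vertical line through `q`. -/
def flowForce (ω : ℝ → ℝ) (r : ℝ) (h : ℝ → ℝ → ℝ) (q : ℝ) : ℝ :=
  ∫ p in (0:ℝ)..1,
    ((1 - (dq h q p) ^ 2) / (2 * (dp h q p) ^ 2) - h q p - Omeg ω p + Omeg ω 1 + r) * dp h q p

/-- `wfun ω s h = w^{(s)} = h − H(·; s)`. -/
def wfun (ω : ℝ → ℝ) (s : ℝ) (h : ℝ → ℝ → ℝ) (q p : ℝ) : ℝ := h q p - Hfun ω p s

/-- The flow force flux function `Φ^{(s)}`. -/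
def Phi (ω : ℝ → ℝ) (s : ℝ) (h : ℝ → ℝ → ℝ) (q p : ℝ) : ℝ :=
  ∫ p' in (0:ℝ)..p,
    ((dp (wfun ω s h) q p') ^ 2 / (dp h q p' * (Hp ω p' s) ^ 2)
      - (dq (wfun ω s h) q p') ^ 2 / dp h q p')

/-- `h ∈ C^{2,γ}(S̄)`: `h` is twice continuously differentiable, all partial derivatives of
order ≤ 2 are bounded on the strip, and the second-order derivatives are uniformly
γ-Hölder continuous on the strip. -/
def C2Holder (γ : ℝ) (h : ℝ → ℝ → ℝ) : Prop :=
  ContDiff ℝ 2 (Function.uncurry h) ∧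
  (∀ g ∈ ([h, dq h, dp h, dq (dq h), dp (dq h), dp (dp h)] : List (ℝ → ℝ → ℝ)),
    ∃ M : ℝ, ∀ q : ℝ, ∀ p ∈ Icc (0:ℝ) 1, |g q p| ≤ M) ∧
  (∀ g ∈ ([dq (dq h), dp (dq h), dp (dp h)] : List (ℝ → ℝ → ℝ)),
    ∃ C : ℝ, ∀ q q' : ℝ, ∀ p ∈ Icc (0:ℝ) 1, ∀ p' ∈ Icc (0:ℝ) 1,
      |g q p - g q' p'| ≤ C * Real.sqrt ((q - q') ^ 2 + (p - p') ^ 2) ^ γ)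

end

open Topology

lemma omeg_hasDerivAt {ω : ℝ → ℝ} (hω : Continuous ω) (x : ℝ) :
    HasDerivAt (Omeg ω) (ω x) x :=
  intervalIntegral.integral_hasDerivAt_right (hω.intervalIntegrable 0 x)
    (hω.stronglyMeasurableAtFilter _ _) hω.continuousAt

lemma omeg_continuous {ω : ℝ → ℝ} (hω : Continuous ω) : Continuous (Omeg ω) :=
  continuous_iff_continuousAt.2 fun x => (omeg_hasDerivAt hω x).continuousAt

/-- for every `s > s₀`, `s² − 2Ω(p) > 0` on `[0,1]`, `H(·;s)` is a strictly
increasing `C¹` bijection from `[0,1]` onto `[0, d(s)]`, and its inverse `U` is twice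
continuously differentiable with `U'' + ω(U) = 0`, `U(0)=0`, `U(d(s))=1`, `U'(0)=s` and
`U' > 0` on `[0, d(s)]`. -/
theorem stmt1 (ω : ℝ → ℝ) (hω : Continuous ω) (s : ℝ) (hs : s0 ω < s) :
    (∀ p ∈ Icc (0:ℝ) 1, 0 < s ^ 2 - 2 * Omeg ω p) ∧
    StrictMonoOn (fun p => Hfun ω p s) (Icc (0:ℝ) 1) ∧
    (∀ p ∈ Icc (0:ℝ) 1, HasDerivAt (fun p' => Hfun ω p' s) (Hp ω p s) p) ∧
    ContinuousOn (fun p => Hp ω p s) (Icc (0:ℝ) 1) ∧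
    BijOn (fun p => Hfun ω p s) (Icc (0:ℝ) 1) (Icc (0:ℝ) (dd ω s)) ∧
    ∃ U U' U'' : ℝ → ℝ,
      (∀ y ∈ Icc (0:ℝ) (dd ω s), U y ∈ Icc (0:ℝ) 1 ∧ Hfun ω (U y) s = y) ∧
      (∀ y ∈ Icc (0:ℝ) (dd ω s), HasDerivAt U (U' y) y) ∧
      (∀ y ∈ Icc (0:ℝ) (dd ω s), HasDerivAt U' (U'' y) y) ∧
      ContinuousOn U'' (Icc (0:ℝ) (dd ω s)) ∧
      (∀ y ∈ Icc (0:ℝ) (dd ω s), U'' y + ω (U y) = 0) ∧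
      U 0 = 0 ∧ U (dd ω s) = 1 ∧ U' 0 = s ∧
      (∀ y ∈ Icc (0:ℝ) (dd ω s), 0 < U' y) := by
  have hΩc : Continuous (Omeg ω) := omeg_continuous hω
  have hΩ0 : Omeg ω 0 = 0 := intervalIntegral.integral_same
  -- basic sSup facts
  have h0mem : (0:ℝ) ∈ (fun p => 2 * Omeg ω p) '' Icc (0:ℝ) 1 :=
    ⟨0, left_mem_Icc.2 zero_le_one, by simp [hΩ0]⟩
  have hbdd : BddAbove ((fun p => 2 * Omeg ω p) '' Icc (0:ℝ) 1) :=
    (isCompact_Icc.image (by continuity)).bddAbove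
  have hsup0 : (0:ℝ) ≤ sSup ((fun p => 2 * Omeg ω p) '' Icc (0:ℝ) 1) := le_csSup hbdd h0mem
  have hs0sq : s0 ω ^ 2 = sSup ((fun p => 2 * Omeg ω p) '' Icc (0:ℝ) 1) := Real.sq_sqrt hsup0
  have hspos : 0 < s := lt_of_le_of_lt (Real.sqrt_nonneg _) hs
  have hpos : ∀ p ∈ Icc (0:ℝ) 1, 0 < s ^ 2 - 2 * Omeg ω p := by
    intro p hp
    have h1 : 2 * Omeg ω p ≤ s0 ω ^ 2 := hs0sq ▸ le_csSup hbdd ⟨p, hp, rfl⟩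
    have h2 : s0 ω ^ 2 < s ^ 2 := by
      have hs0nn : 0 ≤ s0 ω := Real.sqrt_nonneg _
      nlinarith [hs, hs0nn]
    linarith
  -- the set where F > 0 is open and contains a closed interval around [0,1]
  set F : ℝ → ℝ := fun p => s ^ 2 - 2 * Omeg ω p with hFdef
  have hFc : Continuous F := by fun_prop
  have hFopen : IsOpen (F ⁻¹' Ioi 0) := isOpen_Ioi.preimage hFc
  have e0 : F ⁻¹' Ioi 0 ∈ 𝓝 (0:ℝ) := hFopen.mem_nhds (hpos 0 (left_mem_Icc.2 zero_le_one))
  have e1 : F ⁻¹' Ioi 0 ∈ 𝓝 (1:ℝ) := hFopen.mem_nhds (hpos 1 (right_mem_Icc.2 zero_le_one))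
  obtain ⟨ε₀, hε₀, hb₀⟩ := Metric.mem_nhds_iff.1 e0
  obtain ⟨ε₁, hε₁, hb₁⟩ := Metric.mem_nhds_iff.1 e1
  set δ : ℝ := min ε₀ ε₁ / 2 with hδdef
  have hδ : 0 < δ := by positivity
  set a : ℝ := -δ with hadef
  set b : ℝ := 1 + δ with hbdef
  have ha0 : a < 0 := by simp [hadef]; linarith
  have hb1 : (1:ℝ) < b := by simp [hbdef]; linarith
  have hab : a < b := by linarith
  have h0K : (0:ℝ) ∈ Icc a b := ⟨ha0.le, by linarith⟩
  have h1K : (1:ℝ) ∈ Icc a b := ⟨by linarith, hb1.le⟩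
  have hsub01 : Icc (0:ℝ) 1 ⊆ Icc a b := Icc_subset_Icc ha0.le hb1.le
  have hJpos : ∀ p ∈ Icc a b, 0 < F p := by
    intro p hp
    rcases lt_or_ge p 0 with h | h
    · have : p ∈ Metric.ball (0:ℝ) ε₀ := by
        rw [Metric.mem_ball, Real.dist_eq]
        rw [abs_of_neg (by linarith : p - 0 < 0)]
        have : -δ ≤ p := hp.1
        have : δ ≤ ε₀ / 2 := by
          rw [hδdef]; rcases min_le_iff.1 (le_refl (min ε₀ ε₁)) with h' | h' <;> nlinarith [min_le_left ε₀ ε₁]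
        linarith
      exact hb₀ this
    rcases le_or_gt p 1 with h' | h'
    · exact hpos p ⟨h, h'⟩
    · have : p ∈ Metric.ball (1:ℝ) ε₁ := by
        rw [Metric.mem_ball, Real.dist_eq]
        rw [abs_of_pos (by linarith : (0:ℝ) < p - 1)]
        have h2 : p ≤ 1 + δ := hp.2
        have : δ ≤ ε₁ / 2 := by
          rw [hδdef]; nlinarith [min_le_right ε₀ ε₁]
        linarith
      exact hb₁ this
  -- continuity of Hp at points where F > 0
  have hHpc : ∀ p ∈ F ⁻¹' Ioi 0, ContinuousAt (fun τ => Hp ω τ s) p := by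
    intro p hp
    have h : 0 < F p := hp
    have hc : ContinuousAt (fun τ => Real.sqrt (s ^ 2 - 2 * Omeg ω τ)) p :=
      (Real.continuous_sqrt.comp (by fun_prop)).continuousAt
    exact ContinuousAt.inv₀ hc (ne_of_gt (Real.sqrt_pos.2 h))
  have hKopen : Icc a b ⊆ F ⁻¹' Ioi 0 := fun p hp => hJpos p hp
  have hHppos : ∀ p ∈ Icc a b, 0 < Hp ω p s := fun p hp =>
    inv_pos.2 (Real.sqrt_pos.2 (hJpos p hp))
  have hcK : ContinuousOn (fun τ => Hp ω τ s) (Icc a b) :=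
    fun t ht => (hHpc t (hKopen ht)).continuousWithinAt
  have hHd : ∀ x ∈ Icc a b, HasDerivAt (fun p' => Hfun ω p' s) (Hp ω x s) x := by
    intro x hx
    have hint := (hcK.mono (Set.ordConnected_Icc.uIcc_subset h0K hx)).intervalIntegrable (μ := volume)
    exact intervalIntegral.integral_hasDerivAt_right hint
      ((ContinuousAt.stronglyMeasurableAtFilter (μ := volume) hFopen hHpc) x (hKopen hx))
      (hHpc x (hKopen hx))
  have hHcont : ContinuousOn (fun p' => Hfun ω p' s) (Icc a b) :=
    fun x hx => (hHd x hx).continuousAt.continuousWithinAt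
  have hmono : StrictMonoOn (fun p' => Hfun ω p' s) (Icc a b) := by
    apply strictMonoOn_of_deriv_pos (convex_Icc a b) hHcont
    intro x hx
    rw [interior_Icc] at hx
    rw [(hHd x (Ioo_subset_Icc_self hx)).deriv]
    exact hHppos x (Ioo_subset_Icc_self hx)
  have hH0 : Hfun ω 0 s = 0 := intervalIntegral.integral_same
  have hdd0 : (0:ℝ) ≤ dd ω s := by
    have h := hmono h0K h1K (by linarith : (0:ℝ) < 1)
    simp only [hH0] at h
    exact h.le
  have hbij : BijOn (fun p => Hfun ω p s) (Icc (0:ℝ) 1) (Icc (0:ℝ) (dd ω s)) := by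
    refine ⟨?_, hmono.injOn.mono hsub01, ?_⟩
    · intro p hp
      constructor
      · have := hmono.monotoneOn h0K (hsub01 hp) hp.1
        simpa [hH0] using this
      · exact hmono.monotoneOn (hsub01 hp) h1K hp.2
    · have h := intermediate_value_Icc zero_le_one (hHcont.mono hsub01)
      rw [hH0] at h
      exact h
  -- the inverse function
  set Hs : ℝ → ℝ := fun p => Hfun ω p s with hHsdef
  have haK : a ∈ Icc a b := left_mem_Icc.2 hab.le
  have hbK : b ∈ Icc a b := right_mem_Icc.2 hab.le
  have hA0 : Hs a < 0 := by
    have := hmono haK h0K ha0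
    simpa [hH0, hHsdef] using this
  have hdB : dd ω s < Hs b := hmono h1K hbK hb1
  have hKbij : BijOn Hs (Icc a b) (Icc (Hs a) (Hs b)) :=
    ⟨fun p hp => ⟨hmono.monotoneOn haK hp hp.1, hmono.monotoneOn hp hbK hp.2⟩,
      hmono.injOn, intermediate_value_Icc hab.le hHcont⟩
  set U : ℝ → ℝ := Function.invFunOn Hs (Icc a b) with hUdef
  have hInv : InvOn U Hs (Icc a b) (Icc (Hs a) (Hs b)) := hKbij.invOn_invFunOn
  have hUmaps : MapsTo U (Icc (Hs a) (Hs b)) (Icc a b) := hKbij.surjOn.mapsTo_invFunOn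
  have hUbij : BijOn U (Icc (Hs a) (Hs b)) (Icc a b) := BijOn.symm hInv.symm hKbij
  have hright : ∀ y ∈ Icc (Hs a) (Hs b), Hs (U y) = y := fun y hy => hInv.2 hy
  have hUmono : MonotoneOn U (Icc (Hs a) (Hs b)) := by
    intro y1 h1 y2 h2 hle
    by_contra hlt
    push_neg at hlt
    have h := hmono (hUmaps h2) (hUmaps h1) hlt
    rw [hright y1 h1, hright y2 h2] at h
    exact absurd hle (not_le.2 h)
  have hT0 : (0:ℝ) ∈ Icc (Hs a) (Hs b) := ⟨hA0.le, le_trans hdd0 hdB.le⟩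
  have hTd : dd ω s ∈ Icc (Hs a) (Hs b) := ⟨le_trans hA0.le hdd0, hdB.le⟩
  have hU0 : U 0 = 0 := by
    apply hKbij.injOn (hUmaps hT0) h0K
    rw [hright 0 hT0]
    simp [hHsdef, hH0]
  have hUd1 : U (dd ω s) = 1 := by
    apply hKbij.injOn (hUmaps hTd) h1K
    rw [hright _ hTd]
    rfl
  have hmemT : ∀ y ∈ Icc (0:ℝ) (dd ω s), y ∈ Icc (Hs a) (Hs b) :=
    fun y hy => ⟨le_trans hA0.le hy.1, le_trans hy.2 hdB.le⟩
  have hmemIoo : ∀ y ∈ Icc (0:ℝ) (dd ω s), y ∈ Ioo (Hs a) (Hs b) :=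
    fun y hy => ⟨lt_of_lt_of_le hA0 hy.1, lt_of_le_of_lt hy.2 hdB⟩
  have hUIcc : ∀ y ∈ Icc (0:ℝ) (dd ω s), U y ∈ Icc (0:ℝ) 1 := by
    intro y hy
    constructor
    · rw [← hU0]; exact hUmono hT0 (hmemT y hy) hy.1
    · rw [← hUd1]; exact hUmono (hmemT y hy) hTd hy.2
  have hIoo : ∀ y ∈ Ioo (Hs a) (Hs b), U y ∈ Ioo a b := by
    intro y hy
    have hyT : y ∈ Icc (Hs a) (Hs b) := Ioo_subset_Icc_self hy
    constructor
    · rcases lt_or_eq_of_le (hUmaps hyT).1 with h | h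
      · exact h
      · exact absurd hy.1 (by rw [h, hright y hyT]; exact lt_irrefl y)
    · rcases lt_or_eq_of_le (hUmaps hyT).2 with h | h
      · exact h
      · exact absurd hy.2 (by rw [← h, hright y hyT]; exact lt_irrefl y)
  have hUcont : ∀ y ∈ Ioo (Hs a) (Hs b), ContinuousAt U y := by
    intro y hy
    apply continuousAt_of_monotoneOn_of_image_mem_nhds hUmono
    · exact mem_of_superset (Ioo_mem_nhds hy.1 hy.2) Ioo_subset_Icc_self
    · rw [hUbij.image_eq]
      exact Icc_mem_nhds (hIoo y hy).1 (hIoo y hy).2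
  set UD : ℝ → ℝ := fun y => Real.sqrt (s ^ 2 - 2 * Omeg ω (U y)) with hUDdef
  have hUd : ∀ y ∈ Ioo (Hs a) (Hs b), HasDerivAt U (UD y) y := by
    intro y hy
    have hyT : y ∈ Icc (Hs a) (Hs b) := Ioo_subset_Icc_self hy
    have h1 : HasDerivAt Hs (Hp ω (U y) s) (U y) := hHd (U y) (hUmaps hyT)
    have h2 : Hp ω (U y) s ≠ 0 := ne_of_gt (hHppos (U y) (hUmaps hyT))
    have h3 : ∀ᶠ z in 𝓝 y, Hs (U z) = z := by
      filter_upwards [Ioo_mem_nhds hy.1 hy.2] with z hz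
      exact hright z (Ioo_subset_Icc_self hz)
    have h4 := HasDerivAt.of_local_left_inverse (hUcont y hy) h1 h2 h3
    have heq : (Hp ω (U y) s)⁻¹ = UD y := by simp [Hp, hUDdef]
    rwa [heq] at h4
  have hUDd : ∀ y ∈ Ioo (Hs a) (Hs b), HasDerivAt UD (-ω (U y)) y := by
    intro y hy
    have hyT : y ∈ Icc (Hs a) (Hs b) := Ioo_subset_Icc_self hy
    have hUy := hUmaps hyT
    have hFU : 0 < s ^ 2 - 2 * Omeg ω (U y) := hJpos (U y) hUy
    have hin : HasDerivAt (fun z => s ^ 2 - 2 * Omeg ω (U z)) (-(2 * (ω (U y) * UD y))) y := by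
      have hcomp : HasDerivAt (fun z => Omeg ω (U z)) (ω (U y) * UD y) y :=
        (omeg_hasDerivAt hω (U y)).comp y (hUd y hy)
      exact ((hasDerivAt_const y (s ^ 2)).sub (hcomp.const_mul 2)).congr_deriv (by ring)
    have hsq : HasDerivAt Real.sqrt (1 / (2 * Real.sqrt (s ^ 2 - 2 * Omeg ω (U y))))
        (s ^ 2 - 2 * Omeg ω (U y)) := Real.hasDerivAt_sqrt (ne_of_gt hFU)
    have h4 := hsq.comp y hin
    have h5 : HasDerivAt UD
        (1 / (2 * Real.sqrt (s ^ 2 - 2 * Omeg ω (U y))) * -(2 * (ω (U y) * UD y))) y := h4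
    have hsqrtpos : 0 < Real.sqrt (s ^ 2 - 2 * Omeg ω (U y)) := Real.sqrt_pos.2 hFU
    have hne := ne_of_gt hsqrtpos
    have hUDy : UD y = Real.sqrt (s ^ 2 - 2 * Omeg ω (U y)) := rfl
    have hval : 1 / (2 * Real.sqrt (s ^ 2 - 2 * Omeg ω (U y))) * -(2 * (ω (U y) * UD y))
        = -ω (U y) := by
      rw [hUDy]
      field_simp
    rwa [hval] at h5
  refine ⟨hpos, hmono.mono hsub01, fun p hp => hHd p (hsub01 hp),
    fun p hp => (hHpc p (hKopen (hsub01 hp))).continuousWithinAt, hbij,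
    U, UD, fun y => -ω (U y), ?_, ?_, ?_, ?_, ?_, hU0, hUd1, ?_, ?_⟩
  · exact fun y hy => ⟨hUIcc y hy, hright y (hmemT y hy)⟩
  · exact fun y hy => hUd y (hmemIoo y hy)
  · exact fun y hy => hUDd y (hmemIoo y hy)
  · exact fun y hy =>
      (((hω.continuousAt).comp (hUcont y (hmemIoo y hy))).neg).continuousWithinAt
  · intro y hy; ring
  · show Real.sqrt (s ^ 2 - 2 * Omeg ω (U 0)) = s
    rw [hU0, hΩ0]
    rw [show s ^ 2 - 2 * 0 = s ^ 2 by ring]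
    exact Real.sqrt_sq hspos.le
  · intro y hy
    exact Real.sqrt_pos.2 (hJpos (U y) (hUmaps (hmemT y hy)))
end

section
/- Assume ω satisfies condition (ii). Then s₀ = 0, the improper integral d₀ := ∫₀¹ (−2Ω(p))^{-1/2} dp is finite, d(s) → d₀ as s → 0+, and R(s) → R₀ := d₀ − Ω(1) as s → 0+; in particular both d₀ and R₀ are finite. -/
open MeasureTheory Set Filter

section Aux
variable {ω : ℝ → ℝ}

variable {ω : ℝ → ℝ}

lemma omeg_zero (ω : ℝ → ℝ) : Omeg ω 0 = 0 := intervalIntegral.integral_same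

lemma omeg_cont (hω : Continuous ω) : Continuous (Omeg ω) :=
  intervalIntegral.continuous_primitive (fun a b => hω.intervalIntegrable a b) 0

/-- ω(0) < 0 under condition (ii). -/
lemma omega0_neg (hω : Continuous ω)
    (hii₁ : ∀ p ∈ Ioc (0:ℝ) 1, Omeg ω p < 0) (hii₂ : ω 0 ≠ 0) : ω 0 < 0 := by
  rcases lt_or_gt_of_ne hii₂ with h | h
  · exact h
  exfalso
  have hev : ∀ᶠ t in nhds (0:ℝ), ω 0 / 2 < ω t :=
    (hω.continuousAt (x := 0)).eventually_const_lt (by linarith)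
  rw [Metric.eventually_nhds_iff] at hev
  obtain ⟨ε, hε, hb⟩ := hev
  set p : ℝ := min (ε / 2) 1 with hp
  have hp0 : 0 < p := lt_min (by linarith) one_pos
  have hp1 : p ≤ 1 := min_le_right _ _
  have hlow : ∀ t ∈ Icc (0:ℝ) p, ω 0 / 2 ≤ ω t := by
    intro t ht
    refine (hb ?_).le
    rw [Real.dist_eq, sub_zero, abs_of_nonneg ht.1]
    calc t ≤ p := ht.2
    _ ≤ ε / 2 := min_le_left _ _
    _ < ε := by linarith
  have hmono := intervalIntegral.integral_mono_on (μ := volume) hp0.le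
    (intervalIntegrable_const (c := ω 0 / 2)) (hω.intervalIntegrable 0 p) hlow
  rw [intervalIntegral.integral_const] at hmono
  have : 0 < Omeg ω p := by
    have : 0 < (p - 0) • (ω 0 / 2) := by
      simp only [sub_zero, smul_eq_mul]; positivity
    exact lt_of_lt_of_le this hmono
  exact absurd (hii₁ p ⟨hp0, hp1⟩) (not_lt.2 this.le)

/-- Pointwise comparison: the candidate limit integrand is bounded by a multiple of p^(-1/2). -/
lemma sqrt_bound (hω : Continuous ω)
    (hii₁ : ∀ p ∈ Ioc (0:ℝ) 1, Omeg ω p < 0) (hii₂ : ω 0 ≠ 0) :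
    ∃ K : ℝ, ∀ p ∈ Ioc (0:ℝ) 1,
      (Real.sqrt (-(2 * Omeg ω p)))⁻¹ ≤ K * p ^ (-(1:ℝ)/2) := by
  have hω0 : ω 0 < 0 := omega0_neg hω hii₁ hii₂
  -- choose δ with ω ≤ ω0/2 on [0,δ]
  have hev : ∀ᶠ t in nhds (0:ℝ), ω t < ω 0 / 2 :=
    (hω.continuousAt (x := 0)).eventually_lt_const (by linarith)
  rw [Metric.eventually_nhds_iff] at hev
  obtain ⟨ε, hε, hb⟩ := hev
  set δ : ℝ := min (ε / 2) 1 with hδdef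
  have hδ0 : 0 < δ := lt_min (by linarith) one_pos
  have hδ1 : δ ≤ 1 := min_le_right _ _
  -- on [0,δ], Ω p ≤ (ω0/2) p, so -(2Ω p) ≥ (-ω0) p
  have hsmall : ∀ p ∈ Ioc (0:ℝ) δ, (-(ω 0)) * p ≤ -(2 * Omeg ω p) := by
    intro p hp
    have hlow : ∀ t ∈ Icc (0:ℝ) p, ω t ≤ ω 0 / 2 := by
      intro t ht
      refine (hb ?_).le
      rw [Real.dist_eq, sub_zero, abs_of_nonneg ht.1]
      calc t ≤ p := ht.2
      _ ≤ δ := hp.2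
      _ ≤ ε / 2 := min_le_left _ _
      _ < ε := by linarith
    have hmono := intervalIntegral.integral_mono_on (μ := volume) hp.1.le
      (hω.intervalIntegrable 0 p) (intervalIntegrable_const (c := ω 0 / 2)) hlow
    rw [intervalIntegral.integral_const] at hmono
    have : Omeg ω p ≤ (p - 0) • (ω 0 / 2) := hmono
    simp only [sub_zero, smul_eq_mul] at this
    nlinarith
  -- minimum of -(2Ω) on [δ,1]
  obtain ⟨x, hxmem, hxmin⟩ :=
    (isCompact_Icc (a := δ) (b := 1)).exists_isMinOn (nonempty_Icc.2 hδ1)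
      ((continuous_const.mul (omeg_cont hω)).neg.continuousOn)
  set m : ℝ := -(2 * Omeg ω x) with hm
  have hm0 : 0 < m := by
    have := hii₁ x ⟨lt_of_lt_of_le hδ0 hxmem.1, hxmem.2⟩
    simp only [hm]; linarith
  refine ⟨(Real.sqrt (-(ω 0)))⁻¹ + (Real.sqrt m)⁻¹, fun p hp => ?_⟩
  have hppos : 0 < p := hp.1
  have hrpow : p ^ (-(1:ℝ)/2) = (Real.sqrt p)⁻¹ := by
    rw [show -(1:ℝ)/2 = -(1/2) by ring, Real.rpow_neg hppos.le, ← Real.sqrt_eq_rpow]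
  rw [hrpow]
  have hsp : 0 < Real.sqrt p := Real.sqrt_pos.2 hppos
  have hsp1 : (1:ℝ) ≤ (Real.sqrt p)⁻¹ := by
    rw [le_inv_comm₀ one_pos hsp]
    simpa using Real.sqrt_le_sqrt hp.2
  rcases le_or_gt p δ with hcase | hcase
  · -- singular region
    have h1 : (-(ω 0)) * p ≤ -(2 * Omeg ω p) := hsmall p ⟨hppos, hcase⟩
    have h2 : 0 < (-(ω 0)) * p := mul_pos (by linarith) hppos
    calc (Real.sqrt (-(2 * Omeg ω p)))⁻¹ ≤ (Real.sqrt ((-(ω 0)) * p))⁻¹ := by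
          apply inv_anti₀ (Real.sqrt_pos.2 h2) (Real.sqrt_le_sqrt h1)
      _ = (Real.sqrt (-(ω 0)))⁻¹ * (Real.sqrt p)⁻¹ := by
          rw [Real.sqrt_mul (by linarith) p, mul_inv]
      _ ≤ ((Real.sqrt (-(ω 0)))⁻¹ + (Real.sqrt m)⁻¹) * (Real.sqrt p)⁻¹ := by
          have : (0:ℝ) ≤ (Real.sqrt m)⁻¹ := by positivity
          nlinarith [hsp.le, inv_nonneg.2 hsp.le]
  · -- regular region
    have h1 : m ≤ -(2 * Omeg ω p) := isMinOn_iff.1 hxmin p ⟨hcase.le, hp.2⟩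
    calc (Real.sqrt (-(2 * Omeg ω p)))⁻¹ ≤ (Real.sqrt m)⁻¹ :=
          inv_anti₀ (Real.sqrt_pos.2 hm0) (Real.sqrt_le_sqrt h1)
      _ = (Real.sqrt m)⁻¹ * 1 := (mul_one _).symm
      _ ≤ (Real.sqrt m)⁻¹ * (Real.sqrt p)⁻¹ := by
          exact mul_le_mul_of_nonneg_left hsp1 (by positivity)
      _ ≤ ((Real.sqrt (-(ω 0)))⁻¹ + (Real.sqrt m)⁻¹) * (Real.sqrt p)⁻¹ := by
          have : (0:ℝ) ≤ (Real.sqrt (-(ω 0)))⁻¹ := by positivity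
          nlinarith [inv_nonneg.2 hsp.le]


lemma g_integrable (hω : Continuous ω)
    (hii₁ : ∀ p ∈ Ioc (0:ℝ) 1, Omeg ω p < 0) (hii₂ : ω 0 ≠ 0) :
    IntervalIntegrable (fun p => (Real.sqrt (-(2 * Omeg ω p)))⁻¹) volume 0 1 := by
  obtain ⟨K, hK⟩ := sqrt_bound hω hii₁ hii₂
  have hrint : IntervalIntegrable (fun p : ℝ => |K| * p ^ (-(1:ℝ)/2)) volume 0 1 :=
    (intervalIntegral.intervalIntegrable_rpow' (by norm_num)).const_mul |K|
  have hgm : Measurable fun p => (Real.sqrt (-(2 * Omeg ω p)))⁻¹ :=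
    (Real.continuous_sqrt.comp (continuous_const.mul (omeg_cont hω)).neg).measurable.inv
  refine hrint.mono_fun hgm.aestronglyMeasurable ?_
  rw [uIoc_of_le (zero_le_one (α := ℝ))]
  filter_upwards [ae_restrict_mem measurableSet_Ioc] with p hp
  have h1 := hK p hp
  have hrpow_nn : (0:ℝ) ≤ p ^ (-(1:ℝ)/2) := Real.rpow_nonneg hp.1.le _
  rw [Real.norm_eq_abs, Real.norm_eq_abs,
    abs_of_nonneg (inv_nonneg.2 (Real.sqrt_nonneg _)),
    abs_of_nonneg (by positivity : (0:ℝ) ≤ |K| * p ^ (-(1:ℝ)/2))]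
  calc (Real.sqrt (-(2 * Omeg ω p)))⁻¹ ≤ K * p ^ (-(1:ℝ)/2) := h1
    _ ≤ |K| * p ^ (-(1:ℝ)/2) := mul_le_mul_of_nonneg_right (le_abs_self K) hrpow_nn

lemma tendsto_aux (hω : Continuous ω)
    (hii₁ : ∀ p ∈ Ioc (0:ℝ) 1, Omeg ω p < 0) (hii₂ : ω 0 ≠ 0) :
    Tendsto (fun s => ∫ p in (0:ℝ)..1, (Real.sqrt (s ^ 2 - 2 * Omeg ω p))⁻¹)
      (nhdsWithin 0 (Ioi 0))
      (nhds (∫ p in (0:ℝ)..1, (Real.sqrt (-(2 * Omeg ω p)))⁻¹)) := by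
  have hpos : ∀ p ∈ Ioc (0:ℝ) 1, 0 < -(2 * Omeg ω p) := fun p hp => by
    have := hii₁ p hp; linarith
  have hgint : IntegrableOn (fun p => (Real.sqrt (-(2 * Omeg ω p)))⁻¹) (Ioc 0 1) volume :=
    (intervalIntegrable_iff_integrableOn_Ioc_of_le zero_le_one).1 (g_integrable hω hii₁ hii₂)
  have key := MeasureTheory.tendsto_integral_filter_of_dominated_convergence
    (μ := volume.restrict (Ioc (0:ℝ) 1)) (l := nhdsWithin (0:ℝ) (Ioi 0))
    (F := fun s p => (Real.sqrt (s ^ 2 - 2 * Omeg ω p))⁻¹)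
    (f := fun p => (Real.sqrt (-(2 * Omeg ω p)))⁻¹)
    (fun p => (Real.sqrt (-(2 * Omeg ω p)))⁻¹)
    (Eventually.of_forall fun s => by
      have hc : Continuous (fun p => Real.sqrt (s ^ 2 - 2 * Omeg ω p)) := by
        have := omeg_cont hω; fun_prop
      exact hc.measurable.inv.aestronglyMeasurable)
    (Eventually.of_forall fun s => by
      filter_upwards [ae_restrict_mem measurableSet_Ioc] with p hp
      rw [Real.norm_eq_abs, abs_of_nonneg (inv_nonneg.2 (Real.sqrt_nonneg _))]
      exact inv_anti₀ (Real.sqrt_pos.2 (hpos p hp))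
        (Real.sqrt_le_sqrt (by nlinarith [sq_nonneg s])))
    hgint
    (by
      filter_upwards [ae_restrict_mem measurableSet_Ioc] with p hp
      have h0 : (0:ℝ) ^ 2 - 2 * Omeg ω p = -(2 * Omeg ω p) := by ring
      have hc : ContinuousAt (fun s : ℝ => (Real.sqrt (s ^ 2 - 2 * Omeg ω p))⁻¹) 0 := by
        apply ContinuousAt.inv₀
        · exact (Real.continuous_sqrt.comp
            ((continuous_pow 2).sub continuous_const)).continuousAt
        · rw [h0]
          exact ne_of_gt (Real.sqrt_pos.2 (hpos p hp))
      have := hc.tendsto.mono_left (nhdsWithin_le_nhds (s := Ioi (0:ℝ)))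
      rwa [h0] at this)
  simpa only [intervalIntegral.integral_of_le (zero_le_one (α := ℝ))] using key

end Aux

/-- under condition (ii) one has `s₀ = 0`, the improper integral
`d₀ = ∫₀¹ (−2Ω(p))^{-1/2} dp` is finite, `d(s) → d₀` and `R(s) → R₀ = d₀ − Ω(1)` as
`s → 0+`. -/
theorem stmt3 (ω : ℝ → ℝ) (hω : Continuous ω)
    (hii₁ : ∀ p ∈ Ioc (0:ℝ) 1, Omeg ω p < 0) (hii₂ : ω 0 ≠ 0) :
    s0 ω = 0 ∧
    IntervalIntegrable (fun p => (Real.sqrt (-(2 * Omeg ω p)))⁻¹) volume 0 1 ∧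
    Tendsto (dd ω) (nhdsWithin 0 (Ioi 0))
      (nhds (∫ p in (0:ℝ)..1, (Real.sqrt (-(2 * Omeg ω p)))⁻¹)) ∧
    Tendsto (RR ω) (nhdsWithin 0 (Ioi 0))
      (nhds ((∫ p in (0:ℝ)..1, (Real.sqrt (-(2 * Omeg ω p)))⁻¹) - Omeg ω 1)) := by
  have hΩ0 : Omeg ω 0 = 0 := omeg_zero ω
  have hs0 : s0 ω = 0 := by
    have hub : ∀ x ∈ (fun p => 2 * Omeg ω p) '' Icc (0:ℝ) 1, x ≤ 0 := by
      rintro x ⟨p, hp, rfl⟩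
      rcases eq_or_lt_of_le hp.1 with h | h
      · simp [← h, hΩ0]
      · have := hii₁ p ⟨h, hp.2⟩
        show 2 * Omeg ω p ≤ 0
        linarith
    have h1 : sSup ((fun p => 2 * Omeg ω p) '' Icc (0:ℝ) 1) = 0 := by
      apply le_antisymm (Real.sSup_le hub le_rfl)
      apply le_csSup ⟨0, hub⟩
      exact ⟨0, left_mem_Icc.2 zero_le_one, by simp [hΩ0]⟩
    rw [s0, h1, Real.sqrt_zero]
  have hint := g_integrable hω hii₁ hii₂
  have h3 : Tendsto (dd ω) (nhdsWithin 0 (Ioi 0))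
      (nhds (∫ p in (0:ℝ)..1, (Real.sqrt (-(2 * Omeg ω p)))⁻¹)) := by
    exact tendsto_aux hω hii₁ hii₂
  refine ⟨hs0, hint, h3, ?_⟩
  have h0 : Tendsto (fun s : ℝ => s ^ 2 / 2 - Omeg ω 1) (nhdsWithin 0 (Ioi 0))
      (nhds (0 - Omeg ω 1)) := by
    have : ContinuousAt (fun s : ℝ => s ^ 2 / 2 - Omeg ω 1) 0 :=
      (((continuous_pow 2).div_const 2).sub continuous_const).continuousAt
    have := this.tendsto.mono_left (nhdsWithin_le_nhds (s := Ioi (0:ℝ)))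
    simpa using this
  have := h0.add h3
  rw [show (∫ p in (0:ℝ)..1, (Real.sqrt (-(2 * Omeg ω p)))⁻¹) - Omeg ω 1
      = (0 - Omeg ω 1) + ∫ p in (0:ℝ)..1, (Real.sqrt (-(2 * Omeg ω p)))⁻¹ by ring]
  exact this
end

section
/- The function I(s) = ∫₀¹ (s² − 2Ω(p))^{-3/2} dp is continuous and strictly decreasing on (s₀, ∞), and I(s) → 0 as s → ∞. Consequently there is at most one s_c ∈ (s₀, ∞) with I(s_c) = 1, and if such s_c exists then R is strictly decreasing on (s₀, s_c) and strictly increasing on (s_c, ∞). -/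
open MeasureTheory Set Filter

namespace Stmt5Aux

open MeasureTheory Set Filter intervalIntegral

variable {ω : ℝ → ℝ}

lemma omeg_cont (hω : Continuous ω) : Continuous (Omeg ω) :=
  intervalIntegral.continuous_primitive (fun a b => hω.intervalIntegrable a b) 0

lemma s0_nonneg (ω : ℝ → ℝ) : 0 ≤ s0 ω := Real.sqrt_nonneg _

lemma two_omeg_le (hω : Continuous ω) {p : ℝ} (hp : p ∈ Icc (0:ℝ) 1) :
    2 * Omeg ω p ≤ s0 ω ^ 2 := by
  have hc : Continuous fun p => 2 * Omeg ω p := continuous_const.mul (omeg_cont hω)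
  have hbdd : BddAbove ((fun p => 2 * Omeg ω p) '' Icc (0:ℝ) 1) :=
    (isCompact_Icc.image hc).bddAbove
  have hmem : 2 * Omeg ω p ≤ sSup ((fun p => 2 * Omeg ω p) '' Icc (0:ℝ) 1) :=
    le_csSup hbdd (mem_image_of_mem _ hp)
  have h0 : (0:ℝ) ≤ sSup ((fun p => 2 * Omeg ω p) '' Icc (0:ℝ) 1) := by
    refine le_csSup hbdd ⟨0, left_mem_Icc.2 zero_le_one, ?_⟩
    simp [Omeg]
  have hs0 : s0 ω ^ 2 = sSup ((fun p => 2 * Omeg ω p) '' Icc (0:ℝ) 1) :=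
    Real.sq_sqrt h0
  linarith

lemma upos (hω : Continuous ω) {s p : ℝ} (hs : s0 ω < s) (hp : p ∈ Icc (0:ℝ) 1) :
    0 < s ^ 2 - 2 * Omeg ω p := by
  have h1 := two_omeg_le hω hp
  have h2 := s0_nonneg ω
  nlinarith

lemma hp_contOn (hω : Continuous ω) {s : ℝ} (hs : s0 ω < s) :
    ContinuousOn (fun p => Hp ω p s) (Icc (0:ℝ) 1) := by
  have hc : Continuous fun p => Real.sqrt (s ^ 2 - 2 * Omeg ω p) :=
    Real.continuous_sqrt.comp (continuous_const.sub (continuous_const.mul (omeg_cont hω)))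
  exact hc.continuousOn.inv₀ fun p hp => (Real.sqrt_pos.2 (upos hω hs hp)).ne'

lemma hp_meas (hω : Continuous ω) (s : ℝ) : Measurable fun p => Hp ω p s :=
  (Real.continuous_sqrt.comp
    (continuous_const.sub (continuous_const.mul (omeg_cont hω)))).measurable.inv

lemma intble (hω : Continuous ω) {s : ℝ} (hs : s0 ω < s) (n : ℕ) :
    IntervalIntegrable (fun p => Hp ω p s ^ n) volume 0 1 := by
  apply ContinuousOn.intervalIntegrable
  rw [uIcc_of_le (zero_le_one : (0:ℝ) ≤ 1)]
  exact (hp_contOn hω hs).pow n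

lemma I_anti (hω : Continuous ω) :
    StrictAntiOn (fun s => ∫ p in (0:ℝ)..1, (Hp ω p s) ^ 3) (Ioi (s0 ω)) := by
  intro s₁ hs₁ s₂ hs₂ h12
  rw [mem_Ioi] at hs₁ hs₂
  have hint1 := intble hω hs₁ 3
  have hint2 := intble hω hs₂ 3
  have hpos : 0 < ∫ p in (0:ℝ)..1, (Hp ω p s₁ ^ 3 - Hp ω p s₂ ^ 3) := by
    apply intervalIntegral.intervalIntegral_pos_of_pos_on (hint1.sub hint2) _ zero_lt_one
    intro p hp
    have hp' : p ∈ Icc (0:ℝ) 1 := Ioo_subset_Icc_self hp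
    have hu1 : 0 < s₁ ^ 2 - 2 * Omeg ω p := upos hω hs₁ hp'
    have hu2 : 0 < s₂ ^ 2 - 2 * Omeg ω p := upos hω hs₂ hp'
    have hlt : s₁ ^ 2 - 2 * Omeg ω p < s₂ ^ 2 - 2 * Omeg ω p := by
      have := s0_nonneg ω; nlinarith
    have h1 : Real.sqrt (s₁ ^ 2 - 2 * Omeg ω p) < Real.sqrt (s₂ ^ 2 - 2 * Omeg ω p) :=
      Real.sqrt_lt_sqrt hu1.le hlt
    have hs1pos : 0 < Real.sqrt (s₁ ^ 2 - 2 * Omeg ω p) := Real.sqrt_pos.2 hu1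
    have h2 : Hp ω p s₂ < Hp ω p s₁ := by
      unfold Hp
      exact inv_strictAnti₀ hs1pos h1
    have h3 : 0 < Hp ω p s₂ := inv_pos.2 (Real.sqrt_pos.2 hu2)
    have h4 : Hp ω p s₂ ^ 3 < Hp ω p s₁ ^ 3 := pow_lt_pow_left₀ h2 h3.le (by norm_num)
    linarith
  rw [intervalIntegral.integral_sub hint1 hint2] at hpos
  linarith

lemma I_contOn (hω : Continuous ω) :
    ContinuousOn (fun s => ∫ p in (0:ℝ)..1, (Hp ω p s) ^ 3) (Ioi (s0 ω)) := by
  intro s₁ hs₁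
  rw [mem_Ioi] at hs₁
  apply ContinuousAt.continuousWithinAt
  set s' : ℝ := (s0 ω + s₁) / 2 with hs'def
  have hs'1 : s0 ω < s' := by rw [hs'def]; linarith
  have hs'2 : s' < s₁ := by rw [hs'def]; linarith
  have hs'0 : 0 ≤ s' := le_of_lt (lt_of_le_of_lt (s0_nonneg ω) hs'1)
  have hfc : Continuous fun p => s' ^ 2 - 2 * Omeg ω p :=
    continuous_const.sub (continuous_const.mul (omeg_cont hω))
  obtain ⟨pm, hpm, hmin⟩ := isCompact_Icc.exists_isMinOn
    (⟨0, left_mem_Icc.2 zero_le_one⟩ : (Icc (0:ℝ) 1).Nonempty) hfc.continuousOn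
  set m : ℝ := s' ^ 2 - 2 * Omeg ω pm with hmdef
  have hm : 0 < m := upos hω hs'1 hpm
  set g : ℝ → ℝ → ℝ := fun s p => (Real.sqrt (max (s ^ 2 - 2 * Omeg ω p) m))⁻¹ ^ 3 with hgdef
  have hgu : Continuous (Function.uncurry g) := by
    have hcm : Continuous fun q : ℝ × ℝ => max (q.1 ^ 2 - 2 * Omeg ω q.2) m :=
      ((continuous_fst.pow 2).sub
        (continuous_const.mul ((omeg_cont hω).comp continuous_snd))).max continuous_const
    have hsq : Continuous fun q : ℝ × ℝ => Real.sqrt (max (q.1 ^ 2 - 2 * Omeg ω q.2) m) :=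
      Real.continuous_sqrt.comp hcm
    have hne : ∀ q : ℝ × ℝ, Real.sqrt (max (q.1 ^ 2 - 2 * Omeg ω q.2) m) ≠ 0 := by
      intro q
      have : 0 < max (q.1 ^ 2 - 2 * Omeg ω q.2) m := lt_of_lt_of_le hm (le_max_right _ _)
      exact (Real.sqrt_pos.2 this).ne'
    exact ((hsq.inv₀ hne).pow 3)
  have hgc : Continuous fun s => ∫ p in (0:ℝ)..1, g s p :=
    intervalIntegral.continuous_parametric_intervalIntegral_of_continuous' hgu 0 1
  apply hgc.continuousAt.congr
  have hmem : Ioi s' ∈ nhds s₁ := Ioi_mem_nhds hs'2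
  filter_upwards [hmem] with s hs
  apply intervalIntegral.integral_congr
  rw [uIcc_of_le (zero_le_one : (0:ℝ) ≤ 1)]
  intro p hp
  have hsge : s' ≤ s := le_of_lt hs
  have hle : m ≤ s ^ 2 - 2 * Omeg ω p := by
    have h1 := isMinOn_iff.1 hmin p hp
    nlinarith
  simp only [hgdef]
  rw [max_eq_left hle]
  rfl

lemma hasDeriv_d (hω : Continuous ω) {x : ℝ} (hx : s0 ω < x) :
    HasDerivAt (fun s => ∫ p in (0:ℝ)..1, Hp ω p s)
      (-(x * ∫ p in (0:ℝ)..1, Hp ω p x ^ 3)) x := by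
  set ε : ℝ := (x - s0 ω) / 2 with hεdef
  have hε0 : 0 < ε := by rw [hεdef]; linarith
  set s' : ℝ := x - ε with hs'def
  have hs'1 : s0 ω < s' := by rw [hs'def, hεdef]; linarith
  have hs'0 : 0 ≤ s' := le_of_lt (lt_of_le_of_lt (s0_nonneg ω) hs'1)
  have hfc : Continuous fun p => s' ^ 2 - 2 * Omeg ω p :=
    continuous_const.sub (continuous_const.mul (omeg_cont hω))
  obtain ⟨pm, hpm, hmin⟩ := isCompact_Icc.exists_isMinOn
    (⟨0, left_mem_Icc.2 zero_le_one⟩ : (Icc (0:ℝ) 1).Nonempty) hfc.continuousOn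
  set m : ℝ := s' ^ 2 - 2 * Omeg ω pm with hmdef
  have hm : 0 < m := upos hω hs'1 hpm
  have key : ∀ s ∈ Metric.ball x ε, ∀ p ∈ Icc (0:ℝ) 1, m ≤ s ^ 2 - 2 * Omeg ω p := by
    intro s hs p hp
    have hd : |s - x| < ε := by rw [← Real.dist_eq]; exact Metric.mem_ball.1 hs
    have h1 : s' < s := by
      have := abs_lt.1 hd
      rw [hs'def]; linarith [this.1]
    have h2 := isMinOn_iff.1 hmin p hp
    nlinarith
  have key2 : ∀ s ∈ Metric.ball x ε, ∀ p ∈ Set.uIoc (0:ℝ) 1,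
      0 < s ^ 2 - 2 * Omeg ω p := by
    intro s hs p hp
    rw [uIoc_of_le (zero_le_one : (0:ℝ) ≤ 1)] at hp
    exact lt_of_lt_of_le hm (key s hs p (Ioc_subset_Icc_self hp))
  have H := intervalIntegral.hasDerivAt_integral_of_dominated_loc_of_deriv_le
    (F := fun s p => Hp ω p s) (F' := fun s p => -(s * Hp ω p s ^ 3))
    (bound := fun _ => (|x| + ε) * ((Real.sqrt m)⁻¹ ^ 3))
    (a := 0) (b := 1) (μ := volume) (x₀ := x) (s := Metric.ball x ε) (Metric.ball_mem_nhds x hε0)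
    ?_ ?_ ?_ ?_ ?_ ?_
  · refine H.2.congr_deriv (Eq.symm ?_)
    rw [intervalIntegral.integral_neg, intervalIntegral.integral_const_mul]
  · filter_upwards with s
    exact (hp_meas hω s).aestronglyMeasurable
  · simpa using intble hω hx 1
  · exact (((hp_meas hω x).pow_const 3).const_mul x).neg.aestronglyMeasurable
  · filter_upwards with p
    intro hp s hs
    have hu : 0 < s ^ 2 - 2 * Omeg ω p := key2 s hs p hp
    rw [uIoc_of_le (zero_le_one : (0:ℝ) ≤ 1)] at hp
    have hmle : m ≤ s ^ 2 - 2 * Omeg ω p := key s hs p (Ioc_subset_Icc_self hp)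
    have hsq : Real.sqrt m ≤ Real.sqrt (s ^ 2 - 2 * Omeg ω p) := Real.sqrt_le_sqrt hmle
    have hsm : 0 < Real.sqrt m := Real.sqrt_pos.2 hm
    have hHple : Hp ω p s ≤ (Real.sqrt m)⁻¹ := by
      unfold Hp; exact inv_anti₀ hsm hsq
    have hHp0 : 0 ≤ Hp ω p s := by unfold Hp; positivity
    have hsabs : |s| ≤ |x| + ε := by
      have hd : |s - x| < ε := by rw [← Real.dist_eq]; exact Metric.mem_ball.1 hs
      calc |s| = |x + (s - x)| := by ring_nf
        _ ≤ |x| + |s - x| := abs_add_le _ _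
        _ ≤ |x| + ε := by linarith
    have : ‖-(s * Hp ω p s ^ 3)‖ = |s| * Hp ω p s ^ 3 := by
      rw [norm_neg, Real.norm_eq_abs, abs_mul, abs_of_nonneg (by positivity : (0:ℝ) ≤ Hp ω p s ^ 3)]
    rw [this]
    have h3 : Hp ω p s ^ 3 ≤ (Real.sqrt m)⁻¹ ^ 3 := pow_le_pow_left₀ hHp0 hHple 3
    have h4 : 0 ≤ |x| + ε := by positivity
    calc |s| * Hp ω p s ^ 3 ≤ (|x| + ε) * Hp ω p s ^ 3 := by
          apply mul_le_mul_of_nonneg_right hsabs (by positivity)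
      _ ≤ (|x| + ε) * ((Real.sqrt m)⁻¹ ^ 3) := by
          apply mul_le_mul_of_nonneg_left h3 h4
  · exact intervalIntegrable_const
  · filter_upwards with p
    intro hp s hs
    have hu : 0 < s ^ 2 - 2 * Omeg ω p := key2 s hs p hp
    have hne : Real.sqrt (s ^ 2 - 2 * Omeg ω p) ≠ 0 := (Real.sqrt_pos.2 hu).ne'
    have h1 : HasDerivAt (fun s : ℝ => s ^ 2 - 2 * Omeg ω p) (2 * s) s := by
      simpa using (hasDerivAt_pow 2 s).sub_const (2 * Omeg ω p)
    have h2 := (Real.hasDerivAt_sqrt hu.ne').comp s h1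
    have h3 := h2.inv hne
    refine h3.congr_deriv (Eq.symm ?_)
    have hsq : Real.sqrt (s ^ 2 - 2 * Omeg ω p) ^ 2 = s ^ 2 - 2 * Omeg ω p :=
      Real.sq_sqrt hu.le
    unfold Hp
    simp only [Function.comp_apply]
    field_simp

lemma RR_deriv (hω : Continuous ω) {x : ℝ} (hx : s0 ω < x) :
    HasDerivAt (RR ω) (x * (1 - ∫ p in (0:ℝ)..1, Hp ω p x ^ 3)) x := by
  have h1 : HasDerivAt (fun s : ℝ => s ^ 2 / 2 - Omeg ω 1) x x := by
    have := ((hasDerivAt_pow 2 x).div_const 2).sub_const (Omeg ω 1)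
    simpa using this
  have h2 := hasDeriv_d hω hx
  have h3 := h1.add h2
  have heq : RR ω = fun s => s ^ 2 / 2 - Omeg ω 1 + ∫ p in (0:ℝ)..1, Hp ω p s := rfl
  rw [heq]
  refine h3.congr_deriv (Eq.symm ?_)
  ring

end Stmt5Aux

/-- `I(s) = ∫₀¹ (s² − 2Ω(p))^{-3/2} dp` is continuous and strictly decreasing
on `(s₀, ∞)` and tends to `0` at `∞`; hence there is at most one `s_c` with `I(s_c) = 1`,
and for such `s_c` the function `R` is strictly decreasing on `(s₀, s_c)` and strictly
increasing on `(s_c, ∞)`. -/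
theorem stmt5 (ω : ℝ → ℝ) (hω : Continuous ω) :
    ContinuousOn (fun s => ∫ p in (0:ℝ)..1, (Hp ω p s) ^ 3) (Ioi (s0 ω)) ∧
    StrictAntiOn (fun s => ∫ p in (0:ℝ)..1, (Hp ω p s) ^ 3) (Ioi (s0 ω)) ∧
    Tendsto (fun s => ∫ p in (0:ℝ)..1, (Hp ω p s) ^ 3) atTop (nhds 0) ∧
    (∀ s₁ ∈ Ioi (s0 ω), ∀ s₂ ∈ Ioi (s0 ω),
      (∫ p in (0:ℝ)..1, (Hp ω p s₁) ^ 3) = 1 →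
      (∫ p in (0:ℝ)..1, (Hp ω p s₂) ^ 3) = 1 → s₁ = s₂) ∧
    (∀ sc ∈ Ioi (s0 ω), (∫ p in (0:ℝ)..1, (Hp ω p sc) ^ 3) = 1 →
      StrictAntiOn (RR ω) (Ioo (s0 ω) sc) ∧ StrictMonoOn (RR ω) (Ioi sc)) := by
  
  have hanti := Stmt5Aux.I_anti hω
  have hcont := Stmt5Aux.I_contOn hω
  have htend : Tendsto (fun s => ∫ p in (0:ℝ)..1, (Hp ω p s) ^ 3) atTop (nhds 0) := by
    have h0 : ∀ᶠ s in atTop, 0 ≤ ∫ p in (0:ℝ)..1, (Hp ω p s) ^ 3 := by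
      filter_upwards with s
      apply intervalIntegral.integral_nonneg zero_le_one
      intro p _
      unfold Hp
      positivity
    have hb : ∀ᶠ s in atTop,
        (∫ p in (0:ℝ)..1, (Hp ω p s) ^ 3) ≤ (s ^ 2 - s0 ω ^ 2)⁻¹ := by
      filter_upwards [eventually_ge_atTop (s0 ω + 1)] with s hs
      have hs0 : s0 ω < s := by linarith
      have hsn := Stmt5Aux.s0_nonneg ω
      have hv1 : (1:ℝ) ≤ s ^ 2 - s0 ω ^ 2 := by nlinarith
      have hv0 : (0:ℝ) < s ^ 2 - s0 ω ^ 2 := by linarith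
      have hptw : ∀ p ∈ Icc (0:ℝ) 1, Hp ω p s ^ 3 ≤ (s ^ 2 - s0 ω ^ 2)⁻¹ := by
        intro p hp
        have h2o := Stmt5Aux.two_omeg_le hω hp
        have hvu : s ^ 2 - s0 ω ^ 2 ≤ s ^ 2 - 2 * Omeg ω p := by linarith
        have hsq : Real.sqrt (s ^ 2 - s0 ω ^ 2) ≤ Real.sqrt (s ^ 2 - 2 * Omeg ω p) :=
          Real.sqrt_le_sqrt hvu
        have hsv : 0 < Real.sqrt (s ^ 2 - s0 ω ^ 2) := Real.sqrt_pos.2 hv0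
        have ha1 : Hp ω p s ≤ (Real.sqrt (s ^ 2 - s0 ω ^ 2))⁻¹ := by
          unfold Hp; exact inv_anti₀ hsv hsq
        have ha0 : 0 ≤ Hp ω p s := by unfold Hp; positivity
        have hle1 : (Real.sqrt (s ^ 2 - s0 ω ^ 2))⁻¹ ≤ 1 := by
          rw [inv_le_one_iff₀]
          right
          rw [show (1:ℝ) = Real.sqrt 1 by simp]
          exact Real.sqrt_le_sqrt hv1
        calc Hp ω p s ^ 3 ≤ ((Real.sqrt (s ^ 2 - s0 ω ^ 2))⁻¹) ^ 3 :=
              pow_le_pow_left₀ ha0 ha1 3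
          _ ≤ ((Real.sqrt (s ^ 2 - s0 ω ^ 2))⁻¹) ^ 2 :=
              pow_le_pow_of_le_one (by positivity) hle1 (by norm_num)
          _ = (s ^ 2 - s0 ω ^ 2)⁻¹ := by
              rw [inv_pow, Real.sq_sqrt hv0.le]
      calc (∫ p in (0:ℝ)..1, (Hp ω p s) ^ 3)
          ≤ ∫ _ in (0:ℝ)..1, (s ^ 2 - s0 ω ^ 2)⁻¹ :=
            intervalIntegral.integral_mono_on zero_le_one (Stmt5Aux.intble hω hs0 3)
              intervalIntegrable_const hptw
        _ = (s ^ 2 - s0 ω ^ 2)⁻¹ := by simp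
    have hg : Tendsto (fun s : ℝ => (s ^ 2 - s0 ω ^ 2)⁻¹) atTop (nhds 0) := by
      apply tendsto_inv_atTop_zero.comp
      have h1 : Tendsto (fun s : ℝ => s ^ 2) atTop atTop :=
        tendsto_pow_atTop two_ne_zero
      simpa [sub_eq_add_neg] using tendsto_atTop_add_const_right atTop (-(s0 ω ^ 2)) h1
    exact squeeze_zero' h0 hb hg
  refine ⟨hcont, hanti, htend, ?_, ?_⟩
  · intro s₁ hs₁ s₂ hs₂ h1 h2
    exact hanti.injOn hs₁ hs₂ (h1.trans h2.symm)
  · intro sc hsc hIsc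
    rw [mem_Ioi] at hsc
    constructor
    · apply strictAntiOn_of_deriv_neg (convex_Ioo _ _)
      · intro y hy
        exact ((Stmt5Aux.RR_deriv hω hy.1).continuousAt).continuousWithinAt
      · intro y hy
        rw [interior_Ioo] at hy
        rw [(Stmt5Aux.RR_deriv hω hy.1).deriv]
        have hy0 : 0 < y := lt_of_le_of_lt (Stmt5Aux.s0_nonneg ω) hy.1
        have hI : 1 < ∫ p in (0:ℝ)..1, Hp ω p y ^ 3 := by
          have h := hanti (mem_Ioi.2 hy.1) (mem_Ioi.2 hsc) hy.2
          simpa [hIsc] using h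
        have : 1 - (∫ p in (0:ℝ)..1, Hp ω p y ^ 3) < 0 := by linarith
        exact mul_neg_of_pos_of_neg hy0 this
    · apply strictMonoOn_of_deriv_pos (convex_Ioi _)
      · intro y hy
        rw [mem_Ioi] at hy
        exact ((Stmt5Aux.RR_deriv hω (hsc.trans hy)).continuousAt).continuousWithinAt
      · intro y hy
        rw [interior_Ioi, mem_Ioi] at hy
        have hys : s0 ω < y := hsc.trans hy
        rw [(Stmt5Aux.RR_deriv hω hys).deriv]
        have hy0 : 0 < y := lt_of_le_of_lt (Stmt5Aux.s0_nonneg ω) hys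
        have hI : (∫ p in (0:ℝ)..1, Hp ω p y ^ 3) < 1 := by
          have h := hanti (mem_Ioi.2 hsc) (mem_Ioi.2 hys) hy
          simpa [hIsc] using h
        have : 0 < 1 - (∫ p in (0:ℝ)..1, Hp ω p y ^ 3) := by linarith
        exact mul_pos hy0 this
end

section
/- Assume s_c ∈ (s₀, ∞) satisfies ∫₀¹ (s_c² − 2Ω(p))^{-3/2} dp = 1, that R₀ = lim_{s→s₀+} R(s) is finite, and let r ≥ R₀; let s₊(r) be the unique solution of R(s) = r in (s_c, ∞). Then s ↦ σ(s;r) is strictly decreasing on (s₀, s₊(r)) and strictly increasing on (s₊(r), ∞), and σ(s;r) → +∞ as s → ∞. -/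
open MeasureTheory Set Filter

noncomputable section Aux
namespace Stmt8

variable {ω : ℝ → ℝ}

/-- the "A" function -/
def Afun (ω : ℝ → ℝ) (s : ℝ) : ℝ := ∫ p in (0:ℝ)..1, Real.sqrt (s ^ 2 - 2 * Omeg ω p)

def Ifun (ω : ℝ → ℝ) (s : ℝ) : ℝ := ∫ p in (0:ℝ)..1, (Hp ω p s) ^ 3

lemma omeg_hasDerivAt (hω : Continuous ω) (p : ℝ) : HasDerivAt (Omeg ω) (ω p) p :=
  intervalIntegral.integral_hasDerivAt_right (hω.intervalIntegrable _ _)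
    (hω.stronglyMeasurableAtFilter _ _) hω.continuousAt

lemma omeg_continuous (hω : Continuous ω) : Continuous (Omeg ω) := by
  have : Differentiable ℝ (Omeg ω) := fun p => (omeg_hasDerivAt hω p).differentiableAt
  exact this.continuous

lemma omeg_zero : Omeg ω 0 = 0 := intervalIntegral.integral_same

lemma s0_nonneg : 0 ≤ s0 ω := Real.sqrt_nonneg _

lemma sq_s0 (hω : Continuous ω) :
    (s0 ω) ^ 2 = sSup ((fun p => 2 * Omeg ω p) '' Icc (0:ℝ) 1) := by
  have hc : Continuous fun p => 2 * Omeg ω p := continuous_const.mul (omeg_continuous hω)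
  have h0 : (0:ℝ) ∈ (fun p => 2 * Omeg ω p) '' Icc (0:ℝ) 1 :=
    ⟨0, by simp, by simp [omeg_zero]⟩
  have hb : BddAbove ((fun p => 2 * Omeg ω p) '' Icc (0:ℝ) 1) :=
    (isCompact_Icc.image hc).bddAbove
  rw [s0, Real.sq_sqrt (le_csSup hb h0)]

lemma two_omeg_le (hω : Continuous ω) {p : ℝ} (hp : p ∈ Icc (0:ℝ) 1) :
    2 * Omeg ω p ≤ (s0 ω) ^ 2 := by
  rw [sq_s0 hω]
  exact le_csSup ((isCompact_Icc.image (continuous_const.mul (omeg_continuous hω))).bddAbove) ⟨p, hp, rfl⟩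

lemma sub_pos_of_lt (hω : Continuous ω) {s : ℝ} (hs : s0 ω < s) {p : ℝ}
    (hp : p ∈ Icc (0:ℝ) 1) : 0 < s ^ 2 - 2 * Omeg ω p := by
  have h1 : (s0 ω) ^ 2 < s ^ 2 := by
    have := s0_nonneg (ω := ω); nlinarith
  have := two_omeg_le hω hp
  linarith

lemma hp_pos (hω : Continuous ω) {s : ℝ} (hs : s0 ω < s) {p : ℝ} (hp : p ∈ Icc (0:ℝ) 1) :
    0 < Hp ω p s :=
  inv_pos.2 (Real.sqrt_pos.2 (sub_pos_of_lt hω hs hp))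

/-- the open set where `s^2 - 2 Ω` is positive -/
lemma exists_open_pos (hω : Continuous ω) {s : ℝ} (hs : s0 ω < s) :
    ∃ U : Set ℝ, IsOpen U ∧ Icc (0:ℝ) 1 ⊆ U ∧ ∀ p ∈ U, 0 < s ^ 2 - 2 * Omeg ω p := by
  refine ⟨{p | 0 < s ^ 2 - 2 * Omeg ω p}, ?_, ?_, fun p hp => hp⟩
  · exact isOpen_lt continuous_const (continuous_const.sub (continuous_const.mul (omeg_continuous hω)))
  · exact fun p hp => sub_pos_of_lt hω hs hp

lemma hp_continuousAt (hω : Continuous ω) {s p : ℝ} (h : 0 < s ^ 2 - 2 * Omeg ω p) :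
    ContinuousAt (fun q => Hp ω q s) p := by
  have h1 : ContinuousAt (fun q => Real.sqrt (s ^ 2 - 2 * Omeg ω q)) p :=
    (Real.continuous_sqrt.comp ((continuous_const.sub
      (continuous_const.mul (omeg_continuous hω))))).continuousAt
  exact h1.inv₀ (ne_of_gt (Real.sqrt_pos.2 h))

lemma hp_continuousOn (hω : Continuous ω) {s : ℝ} (hs : s0 ω < s) :
    ContinuousOn (fun p => Hp ω p s) (Icc (0:ℝ) 1) := fun p hp =>
  (hp_continuousAt hω (sub_pos_of_lt hω hs hp)).continuousWithinAt

lemma hp_intervalIntegrable (hω : Continuous ω) {s : ℝ} (hs : s0 ω < s) :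
    IntervalIntegrable (fun p => Hp ω p s) volume 0 1 :=
  (hp_continuousOn hω hs).intervalIntegrable_of_Icc zero_le_one

lemma hfun_hasDerivAt (hω : Continuous ω) {s : ℝ} (hs : s0 ω < s) {p : ℝ}
    (hp : p ∈ Icc (0:ℝ) 1) : HasDerivAt (fun q => Hfun ω q s) (Hp ω p s) p := by
  obtain ⟨U, hUo, hUsub, hUpos⟩ := exists_open_pos hω hs
  refine intervalIntegral.integral_hasDerivAt_right ?_ ?_ ?_
  · refine ContinuousOn.intervalIntegrable (fun q hq => ?_)
    have hq' : q ∈ Icc (0:ℝ) 1 := by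
      rcases hp with ⟨hp0, hp1⟩
      have : uIcc (0:ℝ) p ⊆ Icc 0 1 := by
        rw [uIcc_of_le hp0]; exact Icc_subset_Icc le_rfl hp1
      exact this hq
    exact (hp_continuousAt hω (sub_pos_of_lt hω hs hq')).continuousWithinAt
  · exact ContinuousOn.stronglyMeasurableAtFilter hUo
      (fun q hq => (hp_continuousAt hω (hUpos q hq)).continuousWithinAt) p (hUsub hp)
  · exact hp_continuousAt hω (sub_pos_of_lt hω hs hp)

lemma hfun_continuousOn (hω : Continuous ω) {s : ℝ} (hs : s0 ω < s) :
    ContinuousOn (fun p => Hfun ω p s) (Icc (0:ℝ) 1) := fun p hp =>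
  (hfun_hasDerivAt hω hs hp).continuousAt.continuousWithinAt

lemma int_HHp (hω : Continuous ω) {s : ℝ} (hs : s0 ω < s) :
    ∫ p in (0:ℝ)..1, Hfun ω p s * Hp ω p s = (dd ω s) ^ 2 / 2 := by
  have hd : ∀ p ∈ uIcc (0:ℝ) 1,
      HasDerivAt (fun q => (Hfun ω q s) ^ 2 / 2) (Hfun ω p s * Hp ω p s) p := by
    intro p hp
    rw [uIcc_of_le zero_le_one] at hp
    have := ((hfun_hasDerivAt hω hs hp).pow 2).div_const 2
    refine this.congr_deriv ?_
    ring
  have hint : IntervalIntegrable (fun p => Hfun ω p s * Hp ω p s) volume 0 1 :=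
    ((hfun_continuousOn hω hs).mul (hp_continuousOn hω hs)).intervalIntegrable_of_Icc zero_le_one
  rw [intervalIntegral.integral_eq_sub_of_hasDerivAt hd hint]
  simp [Hfun, dd]

lemma sqrt_continuousOn (hω : Continuous ω) {s : ℝ} :
    ContinuousOn (fun p => Real.sqrt (s ^ 2 - 2 * Omeg ω p)) (Icc (0:ℝ) 1) :=
  (Real.continuous_sqrt.comp
    (continuous_const.sub (continuous_const.mul (omeg_continuous hω)))).continuousOn

lemma sigma_eq (hω : Continuous ω) {s : ℝ} (hs : s0 ω < s) (r : ℝ) :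
    sigmaFun ω s r = Afun ω s - (dd ω s) ^ 2 / 2 + (Omeg ω 1 + r - s ^ 2 / 2) * dd ω s := by
  have hcongr : sigmaFun ω s r = ∫ p in (0:ℝ)..1,
      (Real.sqrt (s ^ 2 - 2 * Omeg ω p) - Hfun ω p s * Hp ω p s
        + (Omeg ω 1 + r - s ^ 2 / 2) * Hp ω p s) := by
    refine intervalIntegral.integral_congr (fun p hp => ?_)
    rw [uIcc_of_le zero_le_one] at hp
    have hX : 0 < s ^ 2 - 2 * Omeg ω p := sub_pos_of_lt hω hs hp
    have hsq : Real.sqrt (s ^ 2 - 2 * Omeg ω p) ^ 2 = s ^ 2 - 2 * Omeg ω p :=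
      Real.sq_sqrt hX.le
    have hne : Real.sqrt (s ^ 2 - 2 * Omeg ω p) ≠ 0 := ne_of_gt (Real.sqrt_pos.2 hX)
    simp only [Hp]
    field_simp
    ring_nf
    rw [show s ^ 2 - Omeg ω p * 2 = s ^ 2 - 2 * Omeg ω p by ring, hsq]
    ring

  have h1 : IntervalIntegrable (fun p => Real.sqrt (s ^ 2 - 2 * Omeg ω p)) volume 0 1 :=
    (sqrt_continuousOn hω).intervalIntegrable_of_Icc zero_le_one
  have h2 : IntervalIntegrable (fun p => Hfun ω p s * Hp ω p s) volume 0 1 :=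
    ((hfun_continuousOn hω hs).mul (hp_continuousOn hω hs)).intervalIntegrable_of_Icc zero_le_one
  have h3 : IntervalIntegrable (fun p => (Omeg ω 1 + r - s ^ 2 / 2) * Hp ω p s) volume 0 1 :=
    (hp_intervalIntegrable hω hs).const_mul _
  rw [hcongr, intervalIntegral.integral_add (h1.sub h2) h3,
    intervalIntegral.integral_sub h1 h2, int_HHp hω hs,
    intervalIntegral.integral_const_mul]
  rfl

lemma param_hasDerivAt (hω : Continuous ω) {s₁ : ℝ} (hs : s0 ω < s₁)
    (g g' : ℝ → ℝ) (hg : ∀ x ∈ Ioi (0:ℝ), HasDerivAt g (g' x) x)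
    (hg'c : ContinuousOn g' (Ioi 0)) :
    HasDerivAt (fun s => ∫ p in (0:ℝ)..1, g (s ^ 2 - 2 * Omeg ω p))
      (∫ p in (0:ℝ)..1, g' (s₁ ^ 2 - 2 * Omeg ω p) * (2 * s₁)) s₁ := by
  set ε : ℝ := (s₁ - s0 ω) / 2 with hε
  have hε0 : 0 < ε := by simp only [hε]; linarith
  set a : ℝ := s0 ω + ε with ha
  have ha0 : 0 < a := by have := s0_nonneg (ω := ω); simp only [ha]; linarith
  have has0 : s0 ω < a := by simp only [ha]; linarith
  have hball : ∀ x ∈ Metric.ball s₁ ε, a < x ∧ x < s₁ + ε := by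
    intro x hx
    rw [Metric.mem_ball, Real.dist_eq, abs_lt] at hx
    constructor <;> [skip; linarith [hx.2]]
    have : s₁ - ε = a := by simp only [ha, hε]; ring
    linarith [hx.1]
  set δ : ℝ := a ^ 2 - (s0 ω) ^ 2 with hδ
  have hδ0 : 0 < δ := by
    have h0 := s0_nonneg (ω := ω); simp only [hδ]; nlinarith
  obtain ⟨M, hM⟩ := isCompact_Icc.exists_bound_of_continuousOn
    (omeg_continuous hω).continuousOn
  set B : ℝ := (s₁ + ε) ^ 2 + 2 * M with hB
  have hX_mem : ∀ x ∈ Metric.ball s₁ ε, ∀ p ∈ Icc (0:ℝ) 1,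
      x ^ 2 - 2 * Omeg ω p ∈ Icc δ B := by
    intro x hx p hp
    obtain ⟨hx1, hx2⟩ := hball x hx
    have h1 := two_omeg_le hω hp
    have h2 := hM p hp
    rw [Real.norm_eq_abs, abs_le] at h2
    constructor
    · simp only [hδ]; nlinarith
    · simp only [hB]; nlinarith
  have hIcc_sub : Icc δ B ⊆ Ioi (0:ℝ) := fun y hy => lt_of_lt_of_le hδ0 hy.1
  obtain ⟨K, hK⟩ := isCompact_Icc.exists_bound_of_continuousOn (hg'c.mono hIcc_sub)
  have huIoc : uIoc (0:ℝ) 1 = Ioc (0:ℝ) 1 := uIoc_of_le zero_le_one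
  have hmemball : s₁ ∈ Metric.ball s₁ ε := Metric.mem_ball_self hε0
  -- continuity of the composed maps
  have hinner : ∀ x : ℝ, Continuous (fun p => x ^ 2 - 2 * Omeg ω p) := fun x =>
    continuous_const.sub (continuous_const.mul (omeg_continuous hω))
  have hcontF : ∀ x ∈ Metric.ball s₁ ε,
      ContinuousOn (fun p => g (x ^ 2 - 2 * Omeg ω p)) (Icc (0:ℝ) 1) := by
    intro x hx p hp
    have hXp := hX_mem x hx p hp
    have h1 : ContinuousAt (fun p => g (x ^ 2 - 2 * Omeg ω p)) p :=
      ContinuousAt.comp (f := fun p => x ^ 2 - 2 * Omeg ω p)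
        (hg _ (hIcc_sub hXp)).continuousAt (hinner x).continuousAt
    exact h1.continuousWithinAt
  have hcontF' : ContinuousOn (fun p => g' (s₁ ^ 2 - 2 * Omeg ω p) * (2 * s₁))
      (Icc (0:ℝ) 1) := by
    intro p hp
    have hXp := hX_mem s₁ hmemball p hp
    have h1 : ContinuousAt (fun p => g' (s₁ ^ 2 - 2 * Omeg ω p)) p :=
      ContinuousAt.comp (f := fun p => s₁ ^ 2 - 2 * Omeg ω p)
        ((hg'c _ (hIcc_sub hXp)).continuousAt ((isOpen_Ioi).mem_nhds (hIcc_sub hXp)))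
        (hinner s₁).continuousAt
    exact h1.continuousWithinAt.mul continuousWithinAt_const
  have key := intervalIntegral.hasDerivAt_integral_of_dominated_loc_of_deriv_le
    (F := fun x p => g (x ^ 2 - 2 * Omeg ω p))
    (F' := fun x p => g' (x ^ 2 - 2 * Omeg ω p) * (2 * x))
    (x₀ := s₁) (a := (0:ℝ)) (b := 1) (μ := volume)
    (bound := fun _ => K * (2 * (s₁ + ε))) (Metric.ball_mem_nhds s₁ hε0) ?_ ?_ ?_ ?_ ?_ ?_
  · exact key.2
  · filter_upwards [Metric.ball_mem_nhds s₁ hε0] with x hx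
    rw [huIoc]
    exact ((hcontF x hx).mono Ioc_subset_Icc_self).aestronglyMeasurable measurableSet_Ioc
  · exact (hcontF s₁ hmemball).intervalIntegrable_of_Icc zero_le_one
  · rw [huIoc]
    exact (hcontF'.mono Ioc_subset_Icc_self).aestronglyMeasurable measurableSet_Ioc
  · refine Eventually.of_forall (fun p hp x hx => ?_)
    rw [huIoc] at hp
    have hp' : p ∈ Icc (0:ℝ) 1 := Ioc_subset_Icc_self hp
    have hXp := hX_mem x hx p hp'
    obtain ⟨hx1, hx2⟩ := hball x hx
    have hgK := hK _ hXp
    rw [Real.norm_eq_abs] at hgK ⊢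
    rw [abs_mul]
    have hx0 : 0 < x := lt_trans ha0 hx1
    have h2x : |2 * x| ≤ 2 * (s₁ + ε) := by rw [abs_of_pos (by linarith)]; linarith
    have hKnn : 0 ≤ K := le_trans (abs_nonneg _) hgK
    exact mul_le_mul hgK h2x (abs_nonneg _) hKnn
  · exact intervalIntegrable_const
  · refine Eventually.of_forall (fun p hp x hx => ?_)
    rw [huIoc] at hp
    have hp' : p ∈ Icc (0:ℝ) 1 := Ioc_subset_Icc_self hp
    have hXp := hX_mem x hx p hp'
    have hinner' : HasDerivAt (fun y : ℝ => y ^ 2 - 2 * Omeg ω p) (2 * x) x := by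
      have := (hasDerivAt_pow 2 x).sub_const (2 * Omeg ω p)
      refine this.congr_deriv ?_; ring
    exact (hg _ (hIcc_sub hXp)).comp x hinner'

lemma afun_hasDerivAt (hω : Continuous ω) {s : ℝ} (hs : s0 ω < s) :
    HasDerivAt (Afun ω) (s * dd ω s) s := by
  have hg : ∀ x ∈ Ioi (0:ℝ), HasDerivAt Real.sqrt (1 / (2 * Real.sqrt x)) x :=
    fun x hx => Real.hasDerivAt_sqrt (ne_of_gt hx)
  have hg'c : ContinuousOn (fun y => 1 / (2 * Real.sqrt y)) (Ioi (0:ℝ)) := by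
    intro y hy
    exact (continuousWithinAt_const.div
      ((continuous_const.mul Real.continuous_sqrt).continuousWithinAt)
      (by have := Real.sqrt_pos.2 hy; positivity))
  have key := param_hasDerivAt hω hs Real.sqrt _ hg hg'c
  have heq : (fun p => 1 / (2 * Real.sqrt (s ^ 2 - 2 * Omeg ω p)) * (2 * s))
      = fun p => s * Hp ω p s := by
    funext p
    by_cases h : Real.sqrt (s ^ 2 - 2 * Omeg ω p) = 0
    · simp [Hp, h]
    · simp only [Hp]; field_simp
  rw [heq, intervalIntegral.integral_const_mul] at key
  exact key

lemma dd_hasDerivAt (hω : Continuous ω) {s : ℝ} (hs : s0 ω < s) :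
    HasDerivAt (dd ω) (-(s * Ifun ω s)) s := by
  have hg : ∀ x ∈ Ioi (0:ℝ), HasDerivAt (fun y => (Real.sqrt y)⁻¹)
      (-(((Real.sqrt x)⁻¹) ^ 3 / 2)) x := by
    intro x hx
    have hne : Real.sqrt x ≠ 0 := ne_of_gt (Real.sqrt_pos.2 hx)
    have := (Real.hasDerivAt_sqrt (ne_of_gt hx)).inv hne
    refine this.congr_deriv ?_
    field_simp
  have hg'c : ContinuousOn (fun y => -(((Real.sqrt y)⁻¹) ^ 3 / 2)) (Ioi (0:ℝ)) := by
    intro y hy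
    have hne : Real.sqrt y ≠ 0 := ne_of_gt (Real.sqrt_pos.2 hy)
    exact (((Real.continuous_sqrt.continuousWithinAt.inv₀ hne).pow 3).div_const 2).neg
  have key := param_hasDerivAt hω hs _ _ hg hg'c
  have heq : (fun p => -(((Real.sqrt (s ^ 2 - 2 * Omeg ω p))⁻¹) ^ 3 / 2) * (2 * s))
      = fun p => -(s * (Hp ω p s) ^ 3) := by
    funext p
    simp only [Hp]; ring
  rw [heq] at key
  have : (∫ p in (0:ℝ)..1, -(s * (Hp ω p s) ^ 3)) = -(s * Ifun ω s) := by
    rw [intervalIntegral.integral_neg, intervalIntegral.integral_const_mul]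
    rfl
  rw [this] at key
  exact key

lemma dd_pos (hω : Continuous ω) {s : ℝ} (hs : s0 ω < s) : 0 < dd ω s := by
  have : dd ω s = ∫ p in (0:ℝ)..1, Hp ω p s := rfl
  rw [this]
  refine intervalIntegral.integral_pos zero_lt_one (hp_continuousOn hω hs)
    (fun p hp => (hp_pos hω hs (Ioc_subset_Icc_self hp)).le) ?_
  exact ⟨0, by simp, hp_pos hω hs (by simp)⟩

lemma ifun_pos (hω : Continuous ω) {s : ℝ} (hs : s0 ω < s) : 0 < Ifun ω s := by
  refine intervalIntegral.integral_pos zero_lt_one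
    ((hp_continuousOn hω hs).pow 3)
    (fun p hp => (pow_pos (hp_pos hω hs (Ioc_subset_Icc_self hp)) 3).le) ?_
  exact ⟨0, by simp, pow_pos (hp_pos hω hs (by simp)) 3⟩

lemma hp_strictAnti (hω : Continuous ω) {s t : ℝ} (hs : s0 ω < s) (hst : s < t)
    {p : ℝ} (hp : p ∈ Icc (0:ℝ) 1) : Hp ω p t < Hp ω p s := by
  have h0 := s0_nonneg (ω := ω)
  have hXs : 0 < s ^ 2 - 2 * Omeg ω p := sub_pos_of_lt hω hs hp
  have hXlt : s ^ 2 - 2 * Omeg ω p < t ^ 2 - 2 * Omeg ω p := by nlinarith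
  have hsq : Real.sqrt (s ^ 2 - 2 * Omeg ω p) < Real.sqrt (t ^ 2 - 2 * Omeg ω p) :=
    Real.sqrt_lt_sqrt hXs.le hXlt
  exact inv_strictAnti₀ (Real.sqrt_pos.2 hXs) hsq

lemma ifun_strictAntiOn (hω : Continuous ω) : StrictAntiOn (Ifun ω) (Ioi (s0 ω)) := by
  intro s hs t ht hst
  refine intervalIntegral.integral_lt_integral_of_continuousOn_of_le_of_exists_lt zero_lt_one
    ((hp_continuousOn hω ht).pow 3) ((hp_continuousOn hω hs).pow 3) ?_ ?_
  · intro p hp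
    have hp' := Ioc_subset_Icc_self hp
    exact (pow_lt_pow_left₀ (hp_strictAnti hω hs hst hp')
      (hp_pos hω ht hp').le (by norm_num)).le
  · refine ⟨0, by simp, ?_⟩
    have h0 : (0:ℝ) ∈ Icc (0:ℝ) 1 := by simp
    exact pow_lt_pow_left₀ (hp_strictAnti hω hs hst h0) (hp_pos hω ht h0).le (by norm_num)

lemma rr_hasDerivAt (hω : Continuous ω) {s : ℝ} (hs : s0 ω < s) :
    HasDerivAt (RR ω) (s * (1 - Ifun ω s)) s := by
  have h1 : HasDerivAt (fun s : ℝ => s ^ 2 / 2 - Omeg ω 1) s s := by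
    have := ((hasDerivAt_pow 2 s).div_const 2).sub_const (Omeg ω 1)
    refine this.congr_deriv ?_; ring
  have := h1.add (dd_hasDerivAt hω hs)
  have heq : RR ω = fun s => (s ^ 2 / 2 - Omeg ω 1) + dd ω s := by
    funext x; rw [RR]
  rw [heq]
  refine this.congr_deriv ?_
  ring

lemma sigma_hasDerivAt (hω : Continuous ω) (r : ℝ) {s : ℝ} (hs : s0 ω < s) :
    HasDerivAt (fun s => sigmaFun ω s r) (s * Ifun ω s * (RR ω s - r)) s := by
  have hA := afun_hasDerivAt hω hs
  have hd := dd_hasDerivAt hω hs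
  have hF : HasDerivAt
      (fun s => Afun ω s - (dd ω s) ^ 2 / 2 + (Omeg ω 1 + r - s ^ 2 / 2) * dd ω s)
      (s * Ifun ω s * (RR ω s - r)) s := by
    have h2 : HasDerivAt (fun s => (dd ω s) ^ 2 / 2) (2 * dd ω s ^ 1 * -(s * Ifun ω s) / 2) s :=
      (hd.pow 2).div_const 2
    have h3 : HasDerivAt (fun x : ℝ => Omeg ω 1 + r - x ^ 2 / 2) (0 - 2 * s ^ 1 / 2) s :=
      (hasDerivAt_const s (Omeg ω 1 + r)).sub ((hasDerivAt_pow 2 s).div_const 2)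
    have h4 := (hA.sub h2).add (h3.mul hd)
    refine h4.congr_deriv ?_
    rw [RR]
    ring
  refine hF.congr_of_eventuallyEq ?_
  filter_upwards [isOpen_Ioi.mem_nhds hs] with x hx
  exact sigma_eq hω hx r

set_option maxHeartbeats 1000000 in
lemma sigma_tendsto (hω : Continuous ω) (r : ℝ) :
    Tendsto (fun s => sigmaFun ω s r) atTop atTop := by
  obtain ⟨M0, hM0⟩ := isCompact_Icc.exists_bound_of_continuousOn
    (omeg_continuous hω).continuousOn
  set M : ℝ := max M0 0 with hMdef
  have hMnn : 0 ≤ M := le_max_right _ _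
  have hM : ∀ p ∈ Icc (0:ℝ) 1, |Omeg ω p| ≤ M := fun p hp =>
    le_trans (hM0 p hp) (le_max_left _ _)
  set E : ℝ := |Omeg ω 1| + |r| with hEdef
  have hE : 0 ≤ E := by positivity
  set C : ℝ := 2 * M + 1 / 2 + E with hCdef
  refine tendsto_atTop_mono' atTop ?_
    (tendsto_atTop_add_const_right atTop (-C)
      (Tendsto.atTop_div_const two_pos tendsto_id))
  have hSmem : ∀ᶠ s in atTop, max 1 (Real.sqrt (4 * M + 1) + 1) ≤ s :=
    eventually_ge_atTop _
  filter_upwards [hSmem] with s hs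
  have hs1 : (1:ℝ) ≤ s := le_trans (le_max_left _ _) hs
  have hs2 : Real.sqrt (4 * M + 1) + 1 ≤ s := le_trans (le_max_right _ _) hs
  have hs2' : 4 * M + 1 ≤ s ^ 2 := by
    have h1 : Real.sqrt (4 * M + 1) ^ 2 = 4 * M + 1 := Real.sq_sqrt (by linarith)
    nlinarith [Real.sqrt_nonneg (4 * M + 1)]
  have hs0 : s0 ω < s := by
    have h1 : (s0 ω) ^ 2 ≤ 2 * M := by
      rw [sq_s0 hω]
      refine csSup_le ⟨0, 0, by simp, by simp [omeg_zero]⟩ ?_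
      rintro y ⟨p, hp, rfl⟩
      show 2 * Omeg ω p ≤ 2 * M
      have h2 := abs_le.1 (hM p hp)
      linarith [h2.2]
    have h0 := s0_nonneg (ω := ω)
    nlinarith
  set t : ℝ := Real.sqrt (s ^ 2 - 2 * M) with htdef
  have ht2 : t ^ 2 = s ^ 2 - 2 * M := Real.sq_sqrt (by nlinarith)
  have htnn : 0 ≤ t := Real.sqrt_nonneg _
  have ht1 : 1 ≤ t := by nlinarith
  have htpos : 0 < t := lt_of_lt_of_le zero_lt_one ht1
  have hts : t ≤ s := by nlinarith
  -- bounds on dd and Afun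
  have hHple : ∀ p ∈ Icc (0:ℝ) 1, Hp ω p s ≤ t⁻¹ := by
    intro p hp
    have h1 := abs_le.1 (hM p hp)
    have h2 : s ^ 2 - 2 * M ≤ s ^ 2 - 2 * Omeg ω p := by linarith [h1.2]
    have h3 : t ≤ Real.sqrt (s ^ 2 - 2 * Omeg ω p) := Real.sqrt_le_sqrt h2
    exact inv_anti₀ htpos h3
  have hd_le : dd ω s ≤ t⁻¹ := by
    have h1 : dd ω s = ∫ p in (0:ℝ)..1, Hp ω p s := rfl
    have h2 : (∫ p in (0:ℝ)..1, Hp ω p s) ≤ ∫ _ in (0:ℝ)..1, t⁻¹ :=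
      intervalIntegral.integral_mono_on zero_le_one (hp_intervalIntegrable hω hs0)
        intervalIntegrable_const hHple
    rw [h1]
    simpa using h2
  have htinv1 : t⁻¹ ≤ 1 := by
    rw [inv_le_one_iff₀]; right; exact ht1
  have hd_le1 : dd ω s ≤ 1 := le_trans hd_le htinv1
  have hd_pos : 0 < dd ω s := dd_pos hω hs0
  have hA_ge : t ≤ Afun ω s := by
    have h2 : (∫ _ in (0:ℝ)..1, t) ≤ ∫ p in (0:ℝ)..1, Real.sqrt (s ^ 2 - 2 * Omeg ω p) := by
      refine intervalIntegral.integral_mono_on zero_le_one intervalIntegrable_const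
        ((sqrt_continuousOn hω).intervalIntegrable_of_Icc zero_le_one) ?_
      intro p hp
      have h1 := abs_le.1 (hM p hp)
      exact Real.sqrt_le_sqrt (by linarith [h1.2])
    simpa [Afun] using h2
  -- the key inequality
  have hkey : s / 2 - 2 * M ≤ t - s ^ 2 / 2 * t⁻¹ := by
    have h' : t - s ^ 2 / 2 * t⁻¹ = (t ^ 2 - s ^ 2 / 2) / t := by
      field_simp
    rw [h', le_div_iff₀ htpos]
    rcases le_or_gt (4 * M) s with h | h
    · nlinarith [mul_nonneg (sub_nonneg.2 h) (sub_nonneg.2 hts),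
        mul_nonneg hMnn (sub_nonneg.2 hs1)]
    · nlinarith [mul_nonneg (sub_nonneg.2 h.le) (sub_nonneg.2 ht1),
        mul_nonneg (sub_nonneg.2 hs1) (sub_nonneg.2 hs1)]
  -- assemble
  rw [sigma_eq hω hs0 r]
  have hx1 : 0 ≤ (Omeg ω 1 + r + E) * dd ω s :=
    mul_nonneg (by simp only [hEdef]; nlinarith [neg_abs_le (Omeg ω 1), neg_abs_le r])
      hd_pos.le
  have hx2 : 0 ≤ (s ^ 2 / 2) * (t⁻¹ - dd ω s) :=
    mul_nonneg (by positivity) (by linarith)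
  have hx3 : E * dd ω s ≤ E * 1 := mul_le_mul_of_nonneg_left hd_le1 hE
  have hx4 : (dd ω s) ^ 2 ≤ 1 := by nlinarith
  have hx5 : (Omeg ω 1 + r - s ^ 2 / 2) * dd ω s
      = (Omeg ω 1 + r + E) * dd ω s - E * dd ω s - s ^ 2 / 2 * dd ω s := by ring
  have hx6 : s ^ 2 / 2 * t⁻¹ - s ^ 2 / 2 * dd ω s = s ^ 2 / 2 * (t⁻¹ - dd ω s) := by ring
  simp only [hCdef, id_eq]
  linarith [hA_ge, hkey, hx1, hx2, hx3, hx4, hx5, hx6]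

theorem main (ω : ℝ → ℝ) (hω : Continuous ω)
    (sc : ℝ) (hsc : sc ∈ Ioi (s0 ω))
    (hI : (∫ p in (0:ℝ)..1, (Hp ω p sc) ^ 3) = 1)
    (R0 : ℝ) (hR0 : Tendsto (RR ω) (nhdsWithin (s0 ω) (Ioi (s0 ω))) (nhds R0))
    (r : ℝ) (hr : R0 ≤ r)
    (sp : ℝ) (hsp : sp ∈ Ioi sc) (hRsp : RR ω sp = r)
    (huniq : ∀ s ∈ Ioi sc, RR ω s = r → s = sp) :
    StrictAntiOn (fun s => sigmaFun ω s r) (Ioo (s0 ω) sp) ∧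
    StrictMonoOn (fun s => sigmaFun ω s r) (Ioi sp) ∧
    Tendsto (fun s => sigmaFun ω s r) atTop atTop := by
  have hsc' : s0 ω < sc := hsc
  have hscsp : sc < sp := hsp
  have hs0sp : s0 ω < sp := hsc'.trans hscsp
  have hs0nn := s0_nonneg (ω := ω)
  have hpos_of : ∀ x : ℝ, s0 ω < x → 0 < x := fun x hx => lt_of_le_of_lt hs0nn hx
  have hIsc : Ifun ω sc = 1 := hI
  -- R strictly decreasing on (s0, sc]
  have hRanti : StrictAntiOn (RR ω) (Ioc (s0 ω) sc) := by
    refine strictAntiOn_of_deriv_neg (convex_Ioc _ _)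
      (fun x hx => (rr_hasDerivAt hω hx.1).continuousAt.continuousWithinAt) ?_
    intro x hx
    rw [interior_Ioc] at hx
    rw [(rr_hasDerivAt hω hx.1).deriv]
    have hIx : 1 < Ifun ω x := by
      rw [← hIsc]
      exact ifun_strictAntiOn hω hx.1 hsc hx.2
    exact mul_neg_of_pos_of_neg (hpos_of x hx.1) (by linarith)
  -- R strictly increasing on [sc, ∞)
  have hRmono : StrictMonoOn (RR ω) (Ici sc) := by
    refine strictMonoOn_of_deriv_pos (convex_Ici _)
      (fun x hx => (rr_hasDerivAt hω (lt_of_lt_of_le hsc' hx)).continuousAt.continuousWithinAt) ?_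
    intro x hx
    rw [interior_Ici] at hx
    rw [(rr_hasDerivAt hω (hsc'.trans hx)).deriv]
    have hIx : Ifun ω x < 1 := by
      rw [← hIsc]
      exact ifun_strictAntiOn hω hsc (hsc'.trans hx) hx
    exact mul_pos (hpos_of x (hsc'.trans hx)) (by linarith)
  -- R ≤ R0 on (s0, sc]
  have hle_R0 : ∀ t, s0 ω < t → t ≤ sc → RR ω t ≤ R0 := by
    intro t ht1 ht2
    refine ge_of_tendsto hR0 ?_
    filter_upwards [Ioo_mem_nhdsGT_of_mem (left_mem_Ico.2 ht1)] with u hu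
    exact (hRanti ⟨hu.1, le_trans hu.2.le ht2⟩ ⟨ht1, ht2⟩ hu.2).le
  -- sign of R - r
  have hneg : ∀ s ∈ Ioo (s0 ω) sp, RR ω s < r := by
    intro s hs
    rcases le_or_gt s sc with h | h
    · set u : ℝ := (s0 ω + s) / 2 with hu
      have hu1 : s0 ω < u := by simp only [hu]; linarith [hs.1]
      have hu2 : u < s := by simp only [hu]; linarith [hs.1]
      have h1 : RR ω s < RR ω u :=
        hRanti ⟨hu1, le_trans hu2.le h⟩ ⟨hs.1, h⟩ hu2
      have h2 : RR ω u ≤ R0 := hle_R0 u hu1 (le_trans hu2.le h)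
      linarith
    · have h1 : RR ω s < RR ω sp := hRmono h.le hscsp.le hs.2
      rw [hRsp] at h1
      exact h1
  have hposr : ∀ s ∈ Ioi sp, r < RR ω s := by
    intro s hs
    have h1 : RR ω sp < RR ω s := hRmono hscsp.le (le_trans hscsp.le hs.le) hs
    rw [hRsp] at h1
    exact h1
  refine ⟨?_, ?_, sigma_tendsto hω r⟩
  · refine strictAntiOn_of_deriv_neg (convex_Ioo _ _)
      (fun x hx => (sigma_hasDerivAt hω r hx.1).continuousAt.continuousWithinAt) ?_
    intro x hx
    rw [interior_Ioo] at hx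
    rw [(sigma_hasDerivAt hω r hx.1).deriv]
    exact mul_neg_of_pos_of_neg (mul_pos (hpos_of x hx.1) (ifun_pos hω hx.1))
      (sub_neg.2 (hneg x hx))
  · refine strictMonoOn_of_deriv_pos (convex_Ioi _)
      (fun x hx => (sigma_hasDerivAt hω r (hs0sp.trans hx)).continuousAt.continuousWithinAt) ?_
    intro x hx
    rw [interior_Ioi] at hx
    have hx0 : s0 ω < x := hs0sp.trans hx
    rw [(sigma_hasDerivAt hω r hx0).deriv]
    exact mul_pos (mul_pos (hpos_of x hx0) (ifun_pos hω hx0))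
      (sub_pos.2 (hposr x hx))

end Stmt8
end Aux


/-- with `s_c` critical, `R₀ = lim_{s→s₀+} R(s)` finite, `r ≥ R₀` and `s₊(r)`
the unique solution of `R(s) = r` in `(s_c, ∞)`, the function `s ↦ σ(s;r)` is strictly
decreasing on `(s₀, s₊(r))`, strictly increasing on `(s₊(r), ∞)`, and `σ(s;r) → +∞` as
`s → ∞`. -/
theorem stmt8 (ω : ℝ → ℝ) (hω : Continuous ω)
    (sc : ℝ) (hsc : sc ∈ Ioi (s0 ω))
    (hI : (∫ p in (0:ℝ)..1, (Hp ω p sc) ^ 3) = 1)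
    (R0 : ℝ) (hR0 : Tendsto (RR ω) (nhdsWithin (s0 ω) (Ioi (s0 ω))) (nhds R0))
    (r : ℝ) (hr : R0 ≤ r)
    (sp : ℝ) (hsp : sp ∈ Ioi sc) (hRsp : RR ω sp = r)
    (huniq : ∀ s ∈ Ioi sc, RR ω s = r → s = sp) :
    StrictAntiOn (fun s => sigmaFun ω s r) (Ioo (s0 ω) sp) ∧
    StrictMonoOn (fun s => sigmaFun ω s r) (Ioi sp) ∧
    Tendsto (fun s => sigmaFun ω s r) atTop atTop := by
  exact Stmt8.main ω hω sc hsc hI R0 hR0 r hr sp hsp hRsp huniq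
end

section
/- For every r ∈ ℝ and every fixed constant F ∈ ℝ, the function κ(s;r) = 2(F − σ(s;r)) − (r − R(s))² is differentiable in s on (s₀, ∞) with ∂_s κ(s;r) = 2 s (r − R(s)). -/
open MeasureTheory Set Filter

namespace Stmt9Aux

lemma omeg_cont {ω : ℝ → ℝ} (hω : Continuous ω) : Continuous (Omeg ω) :=
  intervalIntegral.continuous_primitive (fun a b => hω.intervalIntegrable a b) 0

lemma sSup_mem_le {ω : ℝ → ℝ} (hω : Continuous ω) {p : ℝ} (hp : p ∈ Icc (0:ℝ) 1) :
    2 * Omeg ω p ≤ sSup ((fun p => 2 * Omeg ω p) '' Icc (0:ℝ) 1) := by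
  apply le_csSup
  · exact (isCompact_Icc.image (continuous_const.mul (omeg_cont hω))).bddAbove
  · exact mem_image_of_mem _ hp

lemma sSup_nonneg' {ω : ℝ → ℝ} (hω : Continuous ω) :
    0 ≤ sSup ((fun p => 2 * Omeg ω p) '' Icc (0:ℝ) 1) := by
  have h0 : 2 * Omeg ω 0 = 0 := by simp [Omeg]
  have := sSup_mem_le hω (p := 0) (by norm_num)
  linarith

lemma s0_nonneg (ω : ℝ → ℝ) : 0 ≤ s0 ω := Real.sqrt_nonneg _

lemma s0_sq {ω : ℝ → ℝ} (hω : Continuous ω) :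
    s0 ω ^ 2 = sSup ((fun p => 2 * Omeg ω p) '' Icc (0:ℝ) 1) :=
  Real.sq_sqrt (sSup_nonneg' hω)

lemma G_lb {ω : ℝ → ℝ} (hω : Continuous ω) {x y p : ℝ} (hy : s0 ω ≤ y) (hyx : y ≤ x)
    (hp : p ∈ Icc (0:ℝ) 1) : y ^ 2 - s0 ω ^ 2 ≤ x ^ 2 - 2 * Omeg ω p := by
  have h1 : 2 * Omeg ω p ≤ s0 ω ^ 2 := (s0_sq hω) ▸ sSup_mem_le hω hp
  have h2 : y ^ 2 ≤ x ^ 2 := by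
    have := (s0_nonneg ω).trans hy
    nlinarith
  linarith

lemma G_pos {ω : ℝ → ℝ} (hω : Continuous ω) {x p : ℝ} (hx : s0 ω < x)
    (hp : p ∈ Icc (0:ℝ) 1) : 0 < x ^ 2 - 2 * Omeg ω p := by
  have := G_lb hω (le_refl (s0 ω)) hx.le hp
  have h2 : s0 ω ^ 2 < x ^ 2 := by nlinarith [s0_nonneg ω]
  have h1 : 2 * Omeg ω p ≤ s0 ω ^ 2 := (s0_sq hω) ▸ sSup_mem_le hω hp
  linarith

end Stmt9Aux

namespace Stmt9Aux

/-- derivative in `x` of `√(x² − 2Ω p)` -/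
lemma sqrtG_hasDeriv {ω : ℝ → ℝ} {x p : ℝ} (hg : 0 < x ^ 2 - 2 * Omeg ω p) :
    HasDerivAt (fun y => Real.sqrt (y ^ 2 - 2 * Omeg ω p))
      (x / Real.sqrt (x ^ 2 - 2 * Omeg ω p)) x := by
  have hinner : HasDerivAt (fun y : ℝ => y ^ 2 - 2 * Omeg ω p) (2 * x) x := by
    simpa using (hasDerivAt_pow 2 x).sub_const (2 * Omeg ω p)
  have hs := (Real.hasDerivAt_sqrt (ne_of_gt hg)).comp x hinner
  have hsq : Real.sqrt (x ^ 2 - 2 * Omeg ω p) ≠ 0 :=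
    ne_of_gt (Real.sqrt_pos.mpr hg)
  refine hs.congr_deriv ?_
  field_simp

lemma invSqrtG_hasDeriv {ω : ℝ → ℝ} {x p : ℝ} (hg : 0 < x ^ 2 - 2 * Omeg ω p) :
    HasDerivAt (fun y => (Real.sqrt (y ^ 2 - 2 * Omeg ω p))⁻¹)
      (-(x / Real.sqrt (x ^ 2 - 2 * Omeg ω p) / (x ^ 2 - 2 * Omeg ω p))) x := by
  have hsq : Real.sqrt (x ^ 2 - 2 * Omeg ω p) ≠ 0 := ne_of_gt (Real.sqrt_pos.mpr hg)
  have h := (sqrtG_hasDeriv hg).inv hsq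
  refine h.congr_deriv ?_
  rw [Real.sq_sqrt hg.le]
  ring

/-- `p ↦ Hp ω p s` is continuous on `[0,1]` for `s > s0` -/
lemma hp_contOn {ω : ℝ → ℝ} (hω : Continuous ω) {s : ℝ} (hs : s0 ω < s) :
    ContinuousOn (fun p => Hp ω p s) (Icc (0:ℝ) 1) := by
  have hc : Continuous (fun p => Real.sqrt (s ^ 2 - 2 * Omeg ω p)) :=
    (continuous_const.sub (continuous_const.mul (omeg_cont hω))).sqrt
  exact hc.continuousOn.inv₀ fun p hp => ne_of_gt (Real.sqrt_pos.mpr (G_pos hω hs hp))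

lemma hp_intInt {ω : ℝ → ℝ} (hω : Continuous ω) {s p : ℝ} (hs : s0 ω < s)
    (hp : p ∈ Icc (0:ℝ) 1) : IntervalIntegrable (fun τ => Hp ω τ s) volume 0 p := by
  apply ContinuousOn.intervalIntegrable
  apply (hp_contOn hω hs).mono
  rw [uIcc_of_le hp.1]
  exact Icc_subset_Icc le_rfl hp.2

/-- FTC: `Hfun` has derivative `Hp` in `p`, for `p ∈ [0,1]`. -/
lemma hfun_hasDeriv {ω : ℝ → ℝ} (hω : Continuous ω) {s p : ℝ} (hs : s0 ω < s)
    (hp : p ∈ Icc (0:ℝ) 1) :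
    HasDerivAt (fun p' => Hfun ω p' s) (Hp ω p s) p := by
  have hmeas : Measurable (fun τ => Hp ω τ s) :=
    ((continuous_const.sub (continuous_const.mul (omeg_cont hω))).sqrt).measurable.inv
  have hcont : ContinuousAt (fun τ => Hp ω τ s) p := by
    have hc : Continuous (fun τ => Real.sqrt (s ^ 2 - 2 * Omeg ω τ)) :=
      (continuous_const.sub (continuous_const.mul (omeg_cont hω))).sqrt
    exact hc.continuousAt.inv₀ (ne_of_gt (Real.sqrt_pos.mpr (G_pos hω hs hp)))
  exact intervalIntegral.integral_hasDerivAt_right (hp_intInt hω hs hp)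
    (hmeas.stronglyMeasurable.stronglyMeasurableAtFilter) hcont

lemma hfun_contOn {ω : ℝ → ℝ} (hω : Continuous ω) {s : ℝ} (hs : s0 ω < s) :
    ContinuousOn (fun p => Hfun ω p s) (Icc (0:ℝ) 1) :=
  fun p hp => ((hfun_hasDeriv hω hs hp).continuousAt).continuousWithinAt

/-- `∫₀¹ H·Hp = d²/2`. -/
lemma int_H_Hp {ω : ℝ → ℝ} (hω : Continuous ω) {s : ℝ} (hs : s0 ω < s) :
    ∫ p in (0:ℝ)..1, Hfun ω p s * Hp ω p s = (dd ω s) ^ 2 / 2 := by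
  have hderiv : ∀ p ∈ uIcc (0:ℝ) 1,
      HasDerivAt (fun p' => (Hfun ω p' s) ^ 2 / 2) (Hfun ω p s * Hp ω p s) p := by
    intro p hp
    rw [uIcc_of_le (by norm_num : (0:ℝ) ≤ 1)] at hp
    have h := ((hfun_hasDeriv hω hs hp).pow 2).div_const 2
    refine h.congr_deriv ?_
    ring
  have hint : IntervalIntegrable (fun p => Hfun ω p s * Hp ω p s) volume 0 1 := by
    apply ContinuousOn.intervalIntegrable
    rw [uIcc_of_le (by norm_num : (0:ℝ) ≤ 1)]
    exact (hfun_contOn hω hs).mul (hp_contOn hω hs)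
  have := intervalIntegral.integral_eq_sub_of_hasDerivAt hderiv hint
  rw [this]
  have h0 : Hfun ω 0 s = 0 := by simp [Hfun]
  simp [dd, h0]

end Stmt9Aux

namespace Stmt9Aux

lemma sqrtG_cont {ω : ℝ → ℝ} (hω : Continuous ω) (s : ℝ) :
    Continuous (fun p => Real.sqrt (s ^ 2 - 2 * Omeg ω p)) :=
  (continuous_const.sub (continuous_const.mul (omeg_cont hω))).sqrt

/-- σ(s;r) = B(s) + (Ω(1) + r − s²/2)·d(s) − d(s)²/2 -/
lemma sigma_eq {ω : ℝ → ℝ} (hω : Continuous ω) {s : ℝ} (hs : s0 ω < s) (r : ℝ) :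
    sigmaFun ω s r = (∫ p in (0:ℝ)..1, Real.sqrt (s ^ 2 - 2 * Omeg ω p))
      + (Omeg ω 1 + r - s ^ 2 / 2) * dd ω s - (dd ω s) ^ 2 / 2 := by
  have h01 : (0:ℝ) ≤ 1 := by norm_num
  have hptwise : ∀ p ∈ uIcc (0:ℝ) 1,
      (1 / (2 * (Hp ω p s) ^ 2) - Hfun ω p s - Omeg ω p + Omeg ω 1 + r) * Hp ω p s
      = Real.sqrt (s ^ 2 - 2 * Omeg ω p)
        + (Omeg ω 1 + r - s ^ 2 / 2) * Hp ω p s - Hfun ω p s * Hp ω p s := by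
    intro p hp
    rw [uIcc_of_le h01] at hp
    have hg : 0 < s ^ 2 - 2 * Omeg ω p := G_pos hω hs hp
    set a := Real.sqrt (s ^ 2 - 2 * Omeg ω p) with ha
    have hapos : 0 < a := Real.sqrt_pos.mpr hg
    have hasq : a ^ 2 = s ^ 2 - 2 * Omeg ω p := Real.sq_sqrt hg.le
    have hOm : Omeg ω p = (s ^ 2 - a ^ 2) / 2 := by rw [hasq]; ring
    show (1 / (2 * (a⁻¹) ^ 2) - Hfun ω p s - Omeg ω p + Omeg ω 1 + r) * a⁻¹
      = a + (Omeg ω 1 + r - s ^ 2 / 2) * a⁻¹ - Hfun ω p s * a⁻¹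
    rw [hOm]
    field_simp
    ring
  rw [sigmaFun, intervalIntegral.integral_congr hptwise]
  have i1 : IntervalIntegrable (fun p => Real.sqrt (s ^ 2 - 2 * Omeg ω p)) volume 0 1 :=
    ((sqrtG_cont hω s)).intervalIntegrable 0 1
  have i2 : IntervalIntegrable (fun p => (Omeg ω 1 + r - s ^ 2 / 2) * Hp ω p s) volume 0 1 := by
    apply ContinuousOn.intervalIntegrable
    rw [uIcc_of_le h01]
    exact continuousOn_const.mul (hp_contOn hω hs)
  have i3 : IntervalIntegrable (fun p => Hfun ω p s * Hp ω p s) volume 0 1 := by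
    apply ContinuousOn.intervalIntegrable
    rw [uIcc_of_le h01]
    exact (hfun_contOn hω hs).mul (hp_contOn hω hs)
  rw [intervalIntegral.integral_sub (i1.add i2) i3, intervalIntegral.integral_add i1 i2,
    intervalIntegral.integral_const_mul, int_H_Hp hω hs]
  rfl

end Stmt9Aux

namespace Stmt9Aux

lemma mem_uIoc_subset {t : ℝ} (ht : t ∈ Set.uIoc (0:ℝ) 1) : t ∈ Icc (0:ℝ) 1 := by
  rw [uIoc_of_le (by norm_num : (0:ℝ) ≤ 1)] at ht
  exact Ioc_subset_Icc_self ht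

lemma B_hasDeriv {ω : ℝ → ℝ} (hω : Continuous ω) {s : ℝ} (hs : s0 ω < s) :
    HasDerivAt (fun x => ∫ p in (0:ℝ)..1, Real.sqrt (x ^ 2 - 2 * Omeg ω p))
      (s * dd ω s) s := by
  set ε := (s - s0 ω) / 2 with hε_def
  have hε : 0 < ε := by simp only [hε_def]; linarith
  set c := ((s + s0 ω) / 2) ^ 2 - s0 ω ^ 2 with hc_def
  have hs0 := s0_nonneg ω
  have hc : 0 < c := by simp only [hc_def]; nlinarith
  have hcs : 0 < Real.sqrt c := Real.sqrt_pos.mpr hc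
  have hball : ∀ x ∈ Metric.ball s ε, (s + s0 ω) / 2 ≤ x ∧ x ≤ s + ε := by
    intro x hx
    rw [Metric.mem_ball, Real.dist_eq, abs_lt] at hx
    constructor <;> [simp only [hε_def] at hx ⊢; skip] <;> [linarith [hx.1]; linarith [hx.2]]
  have hmid : s0 ω < (s + s0 ω) / 2 := by linarith
  have key := intervalIntegral.hasDerivAt_integral_of_dominated_loc_of_deriv_le
    (F := fun x p => Real.sqrt (x ^ 2 - 2 * Omeg ω p))
    (F' := fun x p => x / Real.sqrt (x ^ 2 - 2 * Omeg ω p))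
    (x₀ := s) (a := 0) (b := 1) (bound := fun _ => (s + ε) / Real.sqrt c) (μ := volume) (Metric.ball_mem_nhds s hε)
    (Filter.Eventually.of_forall fun x => (sqrtG_cont hω x).aestronglyMeasurable)
    ((sqrtG_cont hω s).intervalIntegrable 0 1)
    ((measurable_const.div (sqrtG_cont hω s).measurable).aestronglyMeasurable)
    ?_ (intervalIntegrable_const) ?_
  · rcases key with ⟨-, key⟩
    refine key.congr_deriv ?_
    simp_rw [div_eq_mul_inv, intervalIntegral.integral_const_mul]
    rfl
  · -- bound
    apply Filter.Eventually.of_forall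
    intro t ht x hx
    have hp := mem_uIoc_subset ht
    obtain ⟨hx1, hx2⟩ := hball x hx
    have hx0 : 0 ≤ x := le_trans (by linarith) hx1
    have hgc : c ≤ x ^ 2 - 2 * Omeg ω t := by
      have := G_lb hω (y := (s + s0 ω) / 2) (le_of_lt hmid) hx1 hp
      simpa [hc_def] using this
    have hsg : Real.sqrt c ≤ Real.sqrt (x ^ 2 - 2 * Omeg ω t) := Real.sqrt_le_sqrt hgc
    rw [Real.norm_eq_abs, abs_div, abs_of_nonneg hx0, abs_of_nonneg (Real.sqrt_nonneg _)]
    exact div_le_div₀ (by linarith) hx2 hcs hsg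
  · -- differentiability
    apply Filter.Eventually.of_forall
    intro t ht x hx
    have hp := mem_uIoc_subset ht
    have hx1 : s0 ω < x := lt_of_lt_of_le hmid (hball x hx).1
    exact sqrtG_hasDeriv (G_pos hω hx1 hp)

lemma dd_hasDeriv {ω : ℝ → ℝ} (hω : Continuous ω) {s : ℝ} (hs : s0 ω < s) :
    HasDerivAt (dd ω)
      (∫ p in (0:ℝ)..1,
        -(s / Real.sqrt (s ^ 2 - 2 * Omeg ω p) / (s ^ 2 - 2 * Omeg ω p))) s := by
  set ε := (s - s0 ω) / 2 with hε_def
  have hε : 0 < ε := by simp only [hε_def]; linarith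
  set c := ((s + s0 ω) / 2) ^ 2 - s0 ω ^ 2 with hc_def
  have hs0 := s0_nonneg ω
  have hc : 0 < c := by simp only [hc_def]; nlinarith
  have hcs : 0 < Real.sqrt c := Real.sqrt_pos.mpr hc
  have hball : ∀ x ∈ Metric.ball s ε, (s + s0 ω) / 2 ≤ x ∧ x ≤ s + ε := by
    intro x hx
    rw [Metric.mem_ball, Real.dist_eq, abs_lt] at hx
    constructor <;> [simp only [hε_def] at hx ⊢; skip] <;> [linarith [hx.1]; linarith [hx.2]]
  have hmid : s0 ω < (s + s0 ω) / 2 := by linarith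
  have hint : IntervalIntegrable (fun p => (Real.sqrt (s ^ 2 - 2 * Omeg ω p))⁻¹) volume 0 1 := by
    apply ContinuousOn.intervalIntegrable
    rw [uIcc_of_le (by norm_num : (0:ℝ) ≤ 1)]
    exact hp_contOn hω hs
  have key := intervalIntegral.hasDerivAt_integral_of_dominated_loc_of_deriv_le
    (F := fun x p => (Real.sqrt (x ^ 2 - 2 * Omeg ω p))⁻¹)
    (F' := fun x p => -(x / Real.sqrt (x ^ 2 - 2 * Omeg ω p) / (x ^ 2 - 2 * Omeg ω p)))
    (x₀ := s) (a := 0) (b := 1) (bound := fun _ => (s + ε) / Real.sqrt c / c) (μ := volume) (Metric.ball_mem_nhds s hε)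
    (Filter.Eventually.of_forall fun x =>
      ((sqrtG_cont hω x).measurable.inv).aestronglyMeasurable)
    hint
    (((measurable_const.div (sqrtG_cont hω s).measurable).div
      (continuous_const.sub (continuous_const.mul (omeg_cont hω))).measurable).neg.aestronglyMeasurable)
    ?_ (intervalIntegrable_const) ?_
  · rcases key with ⟨-, key⟩
    exact key
  · -- bound
    apply Filter.Eventually.of_forall
    intro t ht x hx
    have hp := mem_uIoc_subset ht
    obtain ⟨hx1, hx2⟩ := hball x hx
    have hx0 : 0 ≤ x := le_trans (by linarith) hx1
    have hgc : c ≤ x ^ 2 - 2 * Omeg ω t := by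
      have := G_lb hω (y := (s + s0 ω) / 2) (le_of_lt hmid) hx1 hp
      simpa [hc_def] using this
    have hg : 0 < x ^ 2 - 2 * Omeg ω t := lt_of_lt_of_le hc hgc
    have hsg : Real.sqrt c ≤ Real.sqrt (x ^ 2 - 2 * Omeg ω t) := Real.sqrt_le_sqrt hgc
    have h1 : x / Real.sqrt (x ^ 2 - 2 * Omeg ω t) ≤ (s + ε) / Real.sqrt c :=
      div_le_div₀ (by linarith) hx2 hcs hsg
    have h2 : x / Real.sqrt (x ^ 2 - 2 * Omeg ω t) / (x ^ 2 - 2 * Omeg ω t)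
        ≤ (s + ε) / Real.sqrt c / c :=
      div_le_div₀ (div_nonneg (by linarith) hcs.le) h1 hc hgc
    rw [Real.norm_eq_abs, abs_neg, abs_of_nonneg
      (div_nonneg (div_nonneg hx0 (Real.sqrt_nonneg _)) hg.le)]
    exact h2
  · -- differentiability
    apply Filter.Eventually.of_forall
    intro t ht x hx
    have hp := mem_uIoc_subset ht
    have hx1 : s0 ω < x := lt_of_lt_of_le hmid (hball x hx).1
    exact invSqrtG_hasDeriv (G_pos hω hx1 hp)

end Stmt9Aux


open Stmt9Aux in
/-- for every `r` and fixed `F`, the function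
`κ(s;r) = 2(F − σ(s;r)) − (r − R(s))²` is differentiable in `s` on `(s₀, ∞)` with
`∂_s κ(s;r) = 2 s (r − R(s))`. -/
theorem stmt9 (ω : ℝ → ℝ) (hω : Continuous ω) (r F : ℝ) :
    ∀ s ∈ Ioi (s0 ω),
      HasDerivAt (fun s' => 2 * (F - sigmaFun ω s' r) - (r - RR ω s') ^ 2)
        (2 * s * (r - RR ω s)) s := by
  intro s hs
  rw [mem_Ioi] at hs
  set D := ∫ p in (0:ℝ)..1,
      -(s / Real.sqrt (s ^ 2 - 2 * Omeg ω p) / (s ^ 2 - 2 * Omeg ω p)) with hD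
  have hd : HasDerivAt (dd ω) D s := dd_hasDeriv hω hs
  have hB := B_hasDeriv hω hs
  have h1 : HasDerivAt (fun x : ℝ => Omeg ω 1 + r - x ^ 2 / 2) (-s) s := by
    have := ((hasDerivAt_pow 2 s).div_const 2).const_sub (Omeg ω 1 + r)
    refine this.congr_deriv ?_
    simp
  have hσ' : HasDerivAt
      (fun x => (∫ p in (0:ℝ)..1, Real.sqrt (x ^ 2 - 2 * Omeg ω p))
        + (Omeg ω 1 + r - x ^ 2 / 2) * dd ω x - (dd ω x) ^ 2 / 2)
      (s * dd ω s + ((-s) * dd ω s + (Omeg ω 1 + r - s ^ 2 / 2) * D)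
        - (2 * dd ω s ^ 1 * D) / 2) s :=
    (hB.add (h1.mul hd)).sub ((hd.pow 2).div_const 2)
  have hσ : HasDerivAt (fun x => sigmaFun ω x r) ((r - RR ω s) * D) s := by
    have heq : (fun x => sigmaFun ω x r) =ᶠ[nhds s]
        (fun x => (∫ p in (0:ℝ)..1, Real.sqrt (x ^ 2 - 2 * Omeg ω p))
          + (Omeg ω 1 + r - x ^ 2 / 2) * dd ω x - (dd ω x) ^ 2 / 2) := by
      filter_upwards [isOpen_Ioi.mem_nhds hs] with x hx
      exact sigma_eq hω hx r
    have := hσ'.congr_of_eventuallyEq heq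
    refine this.congr_deriv ?_
    rw [RR]
    ring
  have hR : HasDerivAt (RR ω) (s + D) s := by
    have h2 := (((hasDerivAt_pow 2 s).div_const 2).sub_const (Omeg ω 1)).add hd
    have : HasDerivAt (fun x : ℝ => x ^ 2 / 2 - Omeg ω 1 + dd ω x) (s + D) s := by
      refine h2.congr_deriv ?_
      simp
    exact this
  have hκ := (((hasDerivAt_const s F).sub hσ).const_mul 2).sub
    (((hasDerivAt_const s r).sub hR).pow 2)
  refine hκ.congr_deriv ?_
  push_cast
  simp only [Pi.sub_apply]
  ring
end
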